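/- arXiv:1611.00848 — 9 statements merged into one kernel-verified Lean document; each statement's English description precedes it below -/
import Mathlib

section
/- If f, g : A → E are algebraic of degrees m and n, then the pointwise product fg is algebraic of degree at most m + n. -/
/-- The difference operator `(D_a f)(x) = f(x+a) − f(x)`. -/
def Dop {A E : Type*} [Add A] [Sub E] (a : A) (f : A → E) : A → E :=
  fun x => f (x + a) - f x

/-- `f` is algebraic of degree at most `n`: all `(n+1)`-fold iterated differences vanish. -/
def AlgBound {A E : Type*} [Add A] [Sub E] [Zero E] (f : A → E) (n : ℕ) : Prop :=
  ∀ l : List A, l.length = n + 1 → ∀ x, (l.foldr Dop f) x = 0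

/-- `f` is algebraic of degree exactly `n`. -/
def IsAlgDeg {A E : Type*} [Add A] [Sub E] [Zero E] (f : A → E) (n : ℕ) : Prop :=
  AlgBound f n ∧ ∀ m : ℕ, AlgBound f m → n ≤ m

section Aux

variable {A E : Type*} [CommSemiring A] [CommRing E]

lemma foldr_Dop_add (l : List A) (p q : A → E) (x : A) :
    l.foldr Dop (fun y => p y + q y) x = l.foldr Dop p x + l.foldr Dop q x := by
  induction l generalizing x with
  | nil => rfl
  | cons a l ih =>
    simp only [List.foldr_cons, Dop, ih]
    ring

lemma foldr_Dop_zero (l : List A) (x : A) :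
    l.foldr Dop (fun _ => (0 : E)) x = 0 := by
  induction l generalizing x with
  | nil => rfl
  | cons a l ih =>
    simp only [List.foldr_cons, Dop, ih]
    ring

lemma foldr_Dop_shift (l : List A) (g : A → E) (a x : A) :
    l.foldr Dop (fun y => g (y + a)) x = l.foldr Dop g (x + a) := by
  induction l generalizing x with
  | nil => rfl
  | cons b l ih =>
    simp only [List.foldr_cons, Dop, ih]
    rw [add_right_comm]

lemma algBound_shift {g : A → E} {n : ℕ} (hg : AlgBound g n) (a : A) :
    AlgBound (fun y => g (y + a)) n := by
  intro l hl x
  rw [foldr_Dop_shift]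
  exact hg l hl _

lemma algBound_diff {f : A → E} {k : ℕ} (hf : AlgBound f (k + 1)) (a : A) :
    AlgBound (Dop a f) k := by
  intro l hl x
  have : (l ++ [a]).foldr Dop f = l.foldr Dop (Dop a f) := by
    rw [List.foldr_append]; rfl
  rw [← this]
  exact hf _ (by simp [hl]) x

lemma Dop_mul (a : A) (f g : A → E) :
    Dop a (fun x => f x * g x) =
      fun x => Dop a f x * g (x + a) + f x * Dop a g x := by
  funext x
  simp only [Dop]
  ring

lemma prod_bound : ∀ (k m n : ℕ) (f g : A → E), m + n = k →
    AlgBound f m → AlgBound g n → AlgBound (fun x => f x * g x) (m + n) := by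
  intro k
  induction k with
  | zero =>
    rintro m n f g hk hf hg l hl x
    obtain ⟨rfl, rfl⟩ := Nat.add_eq_zero.mp hk
    obtain ⟨a, rfl⟩ : ∃ a, l = [a] := by
      match l, hl with
      | [a], _ => exact ⟨a, rfl⟩
    have hfa : Dop a f x = 0 := hf [a] rfl x
    have hga : Dop a g x = 0 := hg [a] rfl x
    simp only [Dop] at hfa hga
    have h1 : f (x + a) = f x := sub_eq_zero.mp hfa
    have h2 : g (x + a) = g x := sub_eq_zero.mp hga
    simp only [List.foldr_cons, List.foldr_nil, Dop, h1, h2, sub_self]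
  | succ k ih =>
    rintro m n f g hk hf hg l hl x
    rcases l.eq_nil_or_concat with rfl | ⟨l', a, rfl⟩
    · simp at hl
    rw [List.concat_eq_append] at hl ⊢
    have hl' : l'.length = m + n := by
      simpa using hl
    have hsplit : (l' ++ [a]).foldr Dop (fun x => f x * g x) =
        l'.foldr Dop (Dop a (fun x => f x * g x)) := by
      rw [List.foldr_append]; rfl
    rw [hsplit, Dop_mul, foldr_Dop_add]
    have h1 : l'.foldr Dop (fun y => Dop a f y * g (y + a)) x = 0 := by
      cases m with
      | zero =>
        have hz : (fun y => Dop a f y * g (y + a)) = fun _ => (0 : E) := by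
          funext y
          rw [show Dop a f y = 0 from hf [a] rfl y, zero_mul]
        rw [hz, foldr_Dop_zero]
      | succ m' =>
        have := ih m' n (Dop a f) (fun y => g (y + a))
          (by omega) (algBound_diff hf a) (algBound_shift hg a)
        exact this l' (by omega) x
    have h2 : l'.foldr Dop (fun y => f y * Dop a g y) x = 0 := by
      cases n with
      | zero =>
        have hz : (fun y => f y * Dop a g y) = fun _ => (0 : E) := by
          funext y
          rw [show Dop a g y = 0 from hg [a] rfl y, mul_zero]
        rw [hz, foldr_Dop_zero]
      | succ n' =>
        have := ih m n' f (Dop a g)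
          (by omega) hf (algBound_diff hg a)
        exact this l' (by omega) x
    rw [h1, h2, add_zero]

end Aux

/-- If `f, g : A → E` are algebraic of degrees `m` and `n`, then the pointwise product
`fg` is algebraic of degree at most `m + n`. -/
theorem stmt5 {A E : Type*} [CommSemiring A] [CommRing E] (f g : A → E) (m n : ℕ)
    (hf : IsAlgDeg f m) (hg : IsAlgDeg g n) :
    AlgBound (fun x => f x * g x) (m + n) :=
  prod_bound (m + n) m n f g rfl hf.1 hg.1
end

section
/- If f : A → E is algebraic of degree m and g : E → E' is algebraic of degree n, then the composition g ∘ f : A → E' is algebraic of degree at most mn. -/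
section Helpers
variable {B F' : Type*} [Add B] [AddCommGroup F']

lemma foldr_congr_pt {F G : B → F'} (h : ∀ x, F x = G x) :
    ∀ (l : List B) (x : B), (l.foldr Dop F) x = (l.foldr Dop G) x := by
  intro l
  induction l with
  | nil => exact h
  | cons a t ih => intro x; simp only [List.foldr_cons, Dop, ih]

lemma foldr_zero_pt : ∀ (l : List B) (x : B), (l.foldr Dop (fun _ => (0:F'))) x = 0 := by
  intro l
  induction l with
  | nil => intro x; rfl
  | cons a t ih => intro x; simp only [List.foldr_cons, Dop, ih, sub_zero]

lemma algBound_zero {k : ℕ} : AlgBound (fun _ : B => (0:F')) k :=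
  fun l _ x => foldr_zero_pt l x

lemma algBound_congr {F G : B → F'} {k : ℕ} (h : ∀ x, F x = G x) (hG : AlgBound G k) :
    AlgBound F k := by
  intro l hl x
  rw [foldr_congr_pt h]
  exact hG l hl x

lemma foldr_add_pt {F G : B → F'} :
    ∀ (l : List B) (x : B), (l.foldr Dop (fun x => F x + G x)) x
      = (l.foldr Dop F) x + (l.foldr Dop G) x := by
  intro l
  induction l with
  | nil => intro x; rfl
  | cons a t ih => intro x; simp only [List.foldr_cons, Dop, ih]; abel

lemma algBound_add {F G : B → F'} {k : ℕ} (hF : AlgBound F k) (hG : AlgBound G k) :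
    AlgBound (fun x => F x + G x) k := by
  intro l hl x
  rw [foldr_add_pt, hF l hl x, hG l hl x, add_zero]

lemma algBound_sum {I : Type*} {k : ℕ} (G : I → B → F') :
    ∀ (S : List I), (∀ i ∈ S, AlgBound (G i) k) →
      AlgBound (fun x => (S.map (fun i => G i x)).sum) k := by
  intro S
  induction S with
  | nil => intro _; exact algBound_congr (fun x => by simp) algBound_zero
  | cons a t ih =>
      intro h
      exact algBound_congr (G := fun x => G a x + (t.map (fun i => G i x)).sum)
        (fun x => by simp)
        (algBound_add (h a (@List.mem_cons_self _ a t)) (ih (fun i hi => h i (List.mem_cons_of_mem a hi))))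

lemma algBound_succ {F : B → F'} {k : ℕ} (h : AlgBound F k) : AlgBound F (k + 1) := by
  intro l hl x
  cases l with
  | nil => simp at hl
  | cons a t =>
      have ht : t.length = k + 1 := by simpa using hl
      simp only [List.foldr_cons, Dop, h t ht, sub_zero]

lemma algBound_mono {F : B → F'} {k k' : ℕ} (h : AlgBound F k) (hk : k ≤ k') : AlgBound F k' := by
  induction k' with
  | zero => exact Nat.le_zero.mp hk ▸ h
  | succ k'' ih =>
      rcases Nat.lt_or_ge k (k'' + 1) with h1 | h1
      · exact algBound_succ (ih (by omega))
      · exact (by omega : k = k'' + 1) ▸ h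

lemma algBound_Dop_succ {F : B → F'} {d : ℕ} (h : AlgBound F (d + 1)) (b : B) :
    AlgBound (Dop b F) d := by
  intro l hl x
  have h2 := h (l ++ [b]) (by simp [hl]) x
  rw [List.foldr_append] at h2
  exact h2

lemma algBound_Dop {F : B → F'} {d : ℕ} (h : AlgBound F d) (b : B) :
    AlgBound (Dop b F) (d - 1) := by
  cases d with
  | zero => exact algBound_congr (fun x => h [b] rfl x) algBound_zero
  | succ d' => exact algBound_Dop_succ h b

lemma algBound_apply_eq {F : B → F'} (h : AlgBound F 0) (x a : B) : F (x + a) = F x :=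
  sub_eq_zero.mp (h [a] rfl x)

lemma algBound_succ_of_forall {F : B → F'} {k : ℕ} (h : ∀ b, AlgBound (Dop b F) k) :
    AlgBound F (k + 1) := by
  intro l hl x
  have hne : l ≠ [] := by intro h'; simp [h'] at hl
  have hd : l.dropLast ++ [l.getLast hne] = l := List.dropLast_append_getLast hne
  rw [← hd, List.foldr_append]
  exact h (l.getLast hne) l.dropLast (by have := @List.length_dropLast _ l; omega) x

lemma sum_map_add {I : Type*} (S : List I) (F G : I → F') :
    (S.map fun i => F i + G i).sum = (S.map F).sum + (S.map G).sum := by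
  induction S with
  | nil => simp
  | cons a t ih => simp [ih]; abel

lemma sum_map_sub {I : Type*} (S : List I) (F G : I → F') :
    (S.map fun i => F i - G i).sum = (S.map F).sum - (S.map G).sum := by
  induction S with
  | nil => simp
  | cons a t ih => simp [ih]; abel

end Helpers

section Specific
variable {A E E' : Type*} [CommSemiring A] [CommRing E] [CommRing E']

lemma foldr_zero_mem (g : E → E') :
    ∀ (T : List E), (0:E) ∈ T → ∀ y, (T.foldr Dop g) y = 0 := by
  intro T
  induction T with
  | nil => intro h; simp at h
  | cons a t ih =>
      intro hm y
      rcases List.mem_cons.mp hm with h0 | h0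
      · simp only [List.foldr_cons, Dop, ← h0, add_zero, sub_self]
      · simp only [List.foldr_cons, Dop, ih h0, sub_zero]

lemma foldr_long_zero {n : ℕ} (g : E → E') (hg : AlgBound g n) :
    ∀ (T : List E), n + 1 ≤ T.length → ∀ y, (T.foldr Dop g) y = 0 := by
  intro T
  induction T with
  | nil => intro h; simp at h
  | cons a t ih =>
      intro h y
      rcases Nat.lt_or_ge t.length (n+1) with h1 | h1
      · have hlen : (a::t).length = n + 1 := by simp at h ⊢; omega
        exact hg (a::t) hlen y
      · simp only [List.foldr_cons, Dop, ih h1, sub_zero]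

lemma Dop_add_pt (u v : E) (H : E → E') (y : E) :
    Dop (u + v) H y = Dop u H y + Dop v H y + Dop v (Dop u H) y := by
  simp only [Dop]
  have h : y + (u + v) = y + v + u := by ring
  rw [h]; ring

def exTail (b : A) : List ((A → E) × ℕ) → List (List ((A → E) × ℕ))
  | [] => []
  | p :: T =>
      (exTail b T).map (fun T' => p :: T') ++
      ([(Dop b p.1, p.2 - 1) :: T] ++
      ((exTail b T).map (fun T' => (Dop b p.1, p.2 - 1) :: T') ++
      ([(Dop b p.1, p.2 - 1) :: p :: T] ++
      (exTail b T).map (fun T' => (Dop b p.1, p.2 - 1) :: p :: T'))))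

lemma key_identity (g : E → E') (b x : A) :
    ∀ (L : List ((A → E) × ℕ)) (y : E),
      ((L.map fun p => p.1 (x + b)).foldr Dop g) y
        = ((L.map fun p => p.1 x).foldr Dop g) y
          + ((exTail b L).map fun L' => ((L'.map fun p => p.1 x).foldr Dop g) y).sum := by
  intro L
  induction L with
  | nil => intro y; simp [exTail]
  | cons p T ih =>
      intro y
      have hub : p.1 (x + b) = p.1 x + Dop b p.1 x := by
        simp [Dop]
      have lhs1 : ((p::T).map fun q => q.1 (x + b)).foldr Dop g y
          = Dop (p.1 x + Dop b p.1 x) ((T.map fun q => q.1 (x + b)).foldr Dop g) y := by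
        simp only [List.map_cons, List.foldr_cons, hub]
      rw [lhs1]
      have step1 : Dop (p.1 x + Dop b p.1 x) ((T.map fun q => q.1 (x+b)).foldr Dop g) y
          = Dop (p.1 x + Dop b p.1 x) ((T.map fun q => q.1 x).foldr Dop g) y
            + ((exTail b T).map fun T' =>
                Dop (p.1 x + Dop b p.1 x) ((T'.map fun q => q.1 x).foldr Dop g) y).sum := by
        simp only [Dop]
        rw [ih, ih, sum_map_sub]
        abel
      rw [step1, Dop_add_pt,
        List.map_congr_left (fun T' (_ : T' ∈ exTail b T) => Dop_add_pt (p.1 x) (Dop b p.1 x) _ y)]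
      simp only [exTail, List.map_append, List.sum_append, List.map_map, Function.comp_def,
        List.map_cons, List.foldr_cons, List.sum_cons, List.map_nil, List.sum_nil, add_zero]
      rw [sum_map_add, sum_map_add]
      abel

end Specific

section Spec
variable {A E E' : Type*} [CommSemiring A] [CommRing E] [CommRing E']

lemma nsub_succ_mul {n a m : ℕ} (h : a < n) : (n - a) * m = (n - (a+1)) * m + m := by
  have h1 : n - a = (n - (a+1)) + 1 := by omega
  rw [h1, add_mul, one_mul]

lemma exTail_spec (b : A) (n m : ℕ) :
    ∀ (L : List ((A → E) × ℕ)), (∀ p ∈ L, AlgBound p.1 p.2 ∧ p.2 < m) →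
      ∀ L' ∈ exTail b L,
        (∀ p ∈ L', AlgBound p.1 p.2 ∧ p.2 < m) ∧
        L.length ≤ L'.length ∧
        ((∃ p ∈ L', ∀ x, p.1 x = 0) ∨
          (L'.length ≤ n →
            (n - L'.length) * m + (L'.map Prod.snd).sum + 1
              ≤ (n - L.length) * m + (L.map Prod.snd).sum)) := by
  intro L
  induction L with
  | nil => intro _ L' hL'; simp [exTail] at hL'
  | cons p T ih =>
      intro hinv L' hL'
      have hp := hinv p (@List.mem_cons_self _ p T)
      have hT : ∀ q ∈ T, AlgBound q.1 q.2 ∧ q.2 < m :=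
        fun q hq => hinv q (List.mem_cons_of_mem p hq)
      have hpd := hp.1
      have hpm := hp.2
      have hq1 : AlgBound (Dop b p.1) (p.2 - 1) := algBound_Dop hpd b
      have hqm : p.2 - 1 < m := by omega
      -- the zero case when p.2 = 0
      have hz : p.2 = 0 → ∀ x, Dop b p.1 x = 0 := by
        intro h0 x
        have := hpd [b] (by simp [h0]) x
        exact this
      simp only [exTail, List.mem_append, List.mem_map, List.mem_singleton] at hL'
      rcases hL' with ⟨T', hT', rfl⟩ | rfl | ⟨T', hT', rfl⟩ | rfl | ⟨T', hT', rfl⟩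
      · -- L' = p :: T'
        obtain ⟨ih1, ih2, ih3⟩ := ih hT T' hT'
        refine ⟨?_, by simpa using ih2, ?_⟩
        · intro q hq
          rcases List.mem_cons.mp hq with rfl | hq
          · exact hp
          · exact ih1 q hq
        rcases ih3 with hzero | ihr
        · obtain ⟨q, hq, hq0⟩ := hzero
          exact Or.inl ⟨q, List.mem_cons_of_mem p hq, hq0⟩
        right
        intro hlen
        simp only [List.length_cons, List.map_cons, List.sum_cons] at *
        have ht'n : T'.length < n := by omega
        have htn : T.length < n := by omega
        have e1 := nsub_succ_mul (m := m) ht'n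
        have e2 := nsub_succ_mul (m := m) htn
        have hIH := ihr (by omega)
        linarith
      · -- L' = q :: T
        refine ⟨?_, by simp, ?_⟩
        · intro q hq
          rcases List.mem_cons.mp hq with rfl | hq
          · exact ⟨hq1, hqm⟩
          · exact hT q hq
        rcases Nat.eq_zero_or_pos p.2 with h0 | h0
        · exact Or.inl ⟨(Dop b p.1, p.2 - 1), List.mem_cons_self, hz h0⟩
        right
        intro hlen
        simp only [List.length_cons, List.map_cons, List.sum_cons]
        have hd : p.2 - 1 + 1 = p.2 := by omega
        linarith
      · -- L' = q :: T'
        obtain ⟨ih1, ih2, ih3⟩ := ih hT T' hT'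
        refine ⟨?_, by simpa using ih2, ?_⟩
        · intro q hq
          rcases List.mem_cons.mp hq with rfl | hq
          · exact ⟨hq1, hqm⟩
          · exact ih1 q hq
        rcases Nat.eq_zero_or_pos p.2 with h0 | h0
        · exact Or.inl ⟨(Dop b p.1, p.2 - 1), List.mem_cons_self, hz h0⟩
        rcases ih3 with hzero | ihr
        · obtain ⟨q, hq, hq0⟩ := hzero
          exact Or.inl ⟨q, List.mem_cons_of_mem _ hq, hq0⟩
        right
        intro hlen
        simp only [List.length_cons, List.map_cons, List.sum_cons] at *
        have ht'n : T'.length < n := by omega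
        have htn : T.length < n := by omega
        have e1 := nsub_succ_mul (m := m) ht'n
        have e2 := nsub_succ_mul (m := m) htn
        have hIH := ihr (by omega)
        have hd : p.2 - 1 + 1 = p.2 := by omega
        linarith
      · -- L' = q :: p :: T
        refine ⟨?_, by simp, ?_⟩
        · intro q hq
          rcases List.mem_cons.mp hq with rfl | hq
          · exact ⟨hq1, hqm⟩
          · rcases List.mem_cons.mp hq with rfl | hq
            · exact hp
            · exact hT q hq
        rcases Nat.eq_zero_or_pos p.2 with h0 | h0
        · exact Or.inl ⟨(Dop b p.1, p.2 - 1), List.mem_cons_self, hz h0⟩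
        right
        intro hlen
        simp only [List.length_cons, List.map_cons, List.sum_cons] at *
        have htn1 : T.length + 1 < n := by omega
        have e2 := nsub_succ_mul (m := m) htn1
        have hd : p.2 - 1 + 1 = p.2 := by omega
        linarith
      · -- L' = q :: p :: T'
        obtain ⟨ih1, ih2, ih3⟩ := ih hT T' hT'
        refine ⟨?_, by simp; omega, ?_⟩
        · intro q hq
          rcases List.mem_cons.mp hq with rfl | hq
          · exact ⟨hq1, hqm⟩
          · rcases List.mem_cons.mp hq with rfl | hq
            · exact hp
            · exact ih1 q hq
        rcases Nat.eq_zero_or_pos p.2 with h0 | h0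
        · exact Or.inl ⟨(Dop b p.1, p.2 - 1), List.mem_cons_self, hz h0⟩
        rcases ih3 with hzero | ihr
        · obtain ⟨q, hq, hq0⟩ := hzero
          exact Or.inl ⟨q, List.mem_cons_of_mem _ (List.mem_cons_of_mem _ hq), hq0⟩
        right
        intro hlen
        simp only [List.length_cons, List.map_cons, List.sum_cons] at *
        have ht'n1 : T'.length + 1 < n := by omega
        have ht'n : T'.length < n := by omega
        have htn : T.length < n := by omega
        have e1 := nsub_succ_mul (m := m) ht'n1
        have e1' := nsub_succ_mul (m := m) ht'n
        have e2 := nsub_succ_mul (m := m) htn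
        have hIH := ihr (by omega)
        have hd : p.2 - 1 + 1 = p.2 := by omega
        linarith

end Spec

section Main
variable {A E E' : Type*} [CommSemiring A] [CommRing E] [CommRing E']

lemma main_lemma {n m : ℕ} (g : E → E') (f : A → E)
    (hg : AlgBound g n) (hf : AlgBound f m) (hm : 1 ≤ m) :
    ∀ N : ℕ, ∀ L : List ((A → E) × ℕ), (∀ p ∈ L, AlgBound p.1 p.2 ∧ p.2 < m) →
      (n - L.length) * m + (L.map Prod.snd).sum ≤ N →
      AlgBound (fun x => ((L.map fun p => p.1 x).foldr Dop g) (f x)) N := by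
  intro N
  induction N using Nat.strong_induction_on with
  | _ N IH =>
  intro L hL hwt
  by_cases hlong : n < L.length
  · exact algBound_congr
      (fun x => foldr_long_zero g hg _ (by simp; omega) (f x)) algBound_zero
  push_neg at hlong
  cases N with
  | zero =>
      have h0 : (n - L.length) * m + (L.map Prod.snd).sum = 0 := by omega
      have hmul : (n - L.length) * m = 0 := by omega
      have hsum : (L.map Prod.snd).sum = 0 := by omega
      have hj : L.length = n := by
        rcases Nat.mul_eq_zero.mp hmul with h | h
        · omega
        · omega
      have hall : ∀ p ∈ L, p.2 = 0 := by
        intro p hp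
        have := List.sum_eq_zero_iff.mp hsum p.2 (List.mem_map.mpr ⟨p, hp, rfl⟩)
        exact this
      intro l hl x
      cases l with
      | nil => simp at hl
      | cons a t =>
          have ht : t = [] := List.eq_nil_of_length_eq_zero (by simpa using hl)
          subst ht
          simp only [List.foldr_cons, List.foldr_nil, Dop]
          have hmap : (L.map fun p => p.1 (x + a)) = L.map fun p => p.1 x := by
            refine List.map_congr_left (fun p hp => ?_)
            have h1 := (hL p hp).1
            rw [hall p hp] at h1
            exact algBound_apply_eq h1 x a
          rw [hmap]
          have hP : AlgBound ((L.map fun p => p.1 x).foldr Dop g) 0 := by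
            intro l' hl' y
            cases l' with
            | nil => simp at hl'
            | cons u t' =>
                have ht' : t' = [] := List.eq_nil_of_length_eq_zero (by simpa using hl')
                subst ht'
                have := hg (u :: L.map fun p => p.1 x) (by simp [hj]) y
                simp only [List.foldr_cons] at this ⊢
                exact this
          have he := algBound_apply_eq hP (f x) (f (x + a) - f x)
          rw [add_sub_cancel] at he
          rw [he, sub_self]
  | succ N₀ =>
      apply algBound_succ_of_forall
      intro b
      have hψ : AlgBound (Dop b f) (m - 1) := algBound_Dop hf b
      have helper : ∀ L₂ : List ((A → E) × ℕ), (∀ p ∈ L₂, AlgBound p.1 p.2 ∧ p.2 < m) →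
          (L₂.length ≤ n → (n - L₂.length) * m + (L₂.map Prod.snd).sum ≤ N₀) →
          AlgBound (fun x => ((L₂.map fun p => p.1 x).foldr Dop g) (f x)) N₀ := by
        intro L₂ h1 h2
        by_cases h3 : L₂.length ≤ n
        · exact IH N₀ (Nat.lt_succ_self N₀) L₂ h1 (h2 h3)
        · exact algBound_congr
            (fun x => foldr_long_zero g hg _ (by simp; omega) (f x)) algBound_zero
      have hzero : ∀ L₂ : List ((A → E) × ℕ), (∃ p ∈ L₂, ∀ x, p.1 x = 0) →
          AlgBound (fun x => ((L₂.map fun p => p.1 x).foldr Dop g) (f x)) N₀ := by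
        rintro L₂ ⟨p, hp, hp0⟩
        exact algBound_congr
          (fun x => foldr_zero_mem g _ (List.mem_map.mpr ⟨p, hp, hp0 x⟩) (f x)) algBound_zero
      have hqfinv : ∀ L₂ : List ((A → E) × ℕ), (∀ p ∈ L₂, AlgBound p.1 p.2 ∧ p.2 < m) →
          (∀ p ∈ ((Dop b f, m - 1) :: L₂), AlgBound p.1 p.2 ∧ p.2 < m) := by
        intro L₂ h1 p hp
        rcases List.mem_cons.mp hp with rfl | hp
        · exact ⟨hψ, by omega⟩
        · exact h1 p hp
      -- the key identity
      have hid : ∀ x, Dop b (fun x => ((L.map fun p => p.1 x).foldr Dop g) (f x)) x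
          = ((((Dop b f, m - 1) :: L).map fun p => p.1 x).foldr Dop g) (f x)
            + ((exTail b L).map fun L' =>
                (((L'.map fun p => p.1 x).foldr Dop g) (f x)
                  + ((((Dop b f, m - 1) :: L').map fun p => p.1 x).foldr Dop g) (f x))).sum := by
        intro x
        simp only [Dop, List.map_cons, List.foldr_cons]
        rw [key_identity g b x L (f (x + b))]
        set w := f (x + b) - f x with hw
        have hfb : f (x + b) = f x + w := by rw [hw]; ring
        rw [hfb]
        rw [List.map_congr_left (fun L' (_ : L' ∈ exTail b L) =>
          show ((L'.map fun p => p.1 x).foldr Dop g) (f x + w)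
              = ((L'.map fun p => p.1 x).foldr Dop g) (f x)
                + (((L'.map fun p => p.1 x).foldr Dop g) (f x + w)
                    - ((L'.map fun p => p.1 x).foldr Dop g) (f x)) from by ring)]
        rw [sum_map_add]
        abel
      apply algBound_congr hid
      apply algBound_add
      · apply helper _ (hqfinv L hL)
        intro h3
        simp only [List.length_cons, List.map_cons, List.sum_cons] at h3 ⊢
        have hjn : L.length < n := by omega
        have e := nsub_succ_mul (m := m) hjn
        have hm1 : m - 1 + 1 = m := by omega
        linarith
      · apply algBound_sum (fun L' x =>
            (((L'.map fun p => p.1 x).foldr Dop g) (f x)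
              + ((((Dop b f, m - 1) :: L').map fun p => p.1 x).foldr Dop g) (f x)))
        intro L' hL'
        obtain ⟨s1, s2, s3⟩ := exTail_spec b n m L hL L' hL'
        rcases s3 with hz | hwt'
        · exact algBound_add (hzero L' hz)
            (hzero _ (by obtain ⟨p, hp, hp0⟩ := hz; exact ⟨p, List.mem_cons_of_mem _ hp, hp0⟩))
        · apply algBound_add
          · apply helper L' s1
            intro h3
            have := hwt' h3
            linarith
          · apply helper _ (hqfinv L' s1)
            intro h3
            simp only [List.length_cons, List.map_cons, List.sum_cons] at h3 ⊢
            have h4 : L'.length < n := by omega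
            have e := nsub_succ_mul (m := m) h4
            have hm1 : m - 1 + 1 = m := by omega
            have h5 := hwt' (by omega)
            linarith

end Main


/-- If `f : A → E` is algebraic of degree `m` and `g : E → E'` is algebraic of degree `n`,
then `g ∘ f` is algebraic of degree at most `m * n`. -/
theorem stmt6 {A E E' : Type*} [CommSemiring A] [CommRing E] [CommRing E']
    (f : A → E) (g : E → E') (m n : ℕ)
    (hf : IsAlgDeg f m) (hg : IsAlgDeg g n) :
    AlgBound (g ∘ f) (m * n) := by
  obtain ⟨hf, -⟩ := hf
  obtain ⟨hg, -⟩ := hg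
  rcases Nat.eq_zero_or_pos m with hm | hm
  · subst hm
    rw [Nat.zero_mul]
    intro l hl x
    cases l with
    | nil => simp at hl
    | cons a t =>
        have ht : t = [] := List.eq_nil_of_length_eq_zero (by simpa using hl)
        subst ht
        simp only [List.foldr_cons, List.foldr_nil, Dop, Function.comp_apply]
        rw [algBound_apply_eq hf x a, sub_self]
  rcases Nat.eq_zero_or_pos n with hn | hn
  · subst hn
    rw [Nat.mul_zero]
    intro l hl x
    cases l with
    | nil => simp at hl
    | cons a t =>
        have ht : t = [] := List.eq_nil_of_length_eq_zero (by simpa using hl)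
        subst ht
        simp only [List.foldr_cons, List.foldr_nil, Dop, Function.comp_apply]
        have he := algBound_apply_eq hg (f x) (f (x + a) - f x)
        rw [add_sub_cancel] at he
        rw [he, sub_self]
  · have h := main_lemma g f hg hf hm (m * n) [] (by simp)
      (by simp [Nat.mul_comm])
    exact algBound_congr (fun x => rfl) h
end

section
/- If f : A → E is algebraic of degree n and i : A → Ā is the canonical map from the semiring A to its Grothendieck ring Ā, then there is a unique map f̄ : Ā → E with f̄ ∘ i = f; moreover f̄ is algebraic of degree n, and if f is multiplicative then so is f̄. -/
namespace Stmt8Aux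

variable {A E : Type*} [AddCommMonoid A] [CommRing E]

/-- Vanishing of all `m`-fold iterated differences. -/
def HB (f : A → E) (m : ℕ) : Prop :=
  ∀ l : List A, l.length = m → ∀ x, (l.foldr Dop f) x = 0

/-- The extension formula `S f n a b` "=" `f (a - b)`. -/
def S (f : A → E) (n : ℕ) (a b : A) : E :=
  ∑ k ∈ Finset.range (n + 1), (-1 : E) ^ k * (Dop b)^[k] f a

theorem Dop_comm (a b : A) (f : A → E) : Dop a (Dop b f) = Dop b (Dop a f) := by
  funext x
  simp only [Dop]
  rw [add_right_comm]
  ring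

theorem iter_comm (b c : A) (f : A → E) (k : ℕ) :
    Dop c ((Dop b)^[k] f) = (Dop b)^[k] (Dop c f) := by
  induction k with
  | zero => rfl
  | succ k ih =>
    rw [Function.iterate_succ_apply', Dop_comm, ih, Function.iterate_succ_apply']

theorem Dop_sub (a : A) (f g : A → E) : Dop a (f - g) = Dop a f - Dop a g := by
  funext x
  simp only [Dop, Pi.sub_apply]
  ring

theorem iter_sub (b : A) (f g : A → E) (k : ℕ) :
    (Dop b)^[k] (f - g) = (Dop b)^[k] f - (Dop b)^[k] g := by
  induction k with
  | zero => rfl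
  | succ k ih =>
    rw [Function.iterate_succ_apply', ih, Dop_sub, Function.iterate_succ_apply',
      Function.iterate_succ_apply']

theorem Dop_zero_fun (a : A) : Dop a (0 : A → E) = 0 := by
  funext x; simp [Dop]

theorem iter_zero_fun (b : A) (k : ℕ) : (Dop b)^[k] (0 : A → E) = 0 :=
  Function.iterate_fixed (Dop_zero_fun b) k

theorem Dop_shift (a c : A) (f : A → E) :
    Dop a (fun x => f (x + c)) = fun x => Dop a f (x + c) := by
  funext x
  simp only [Dop]
  rw [add_right_comm]

theorem iter_shift (b c : A) (f : A → E) (k : ℕ) :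
    (Dop b)^[k] (fun x => f (x + c)) = fun x => (Dop b)^[k] f (x + c) := by
  induction k with
  | zero => rfl
  | succ k ih =>
    rw [Function.iterate_succ_apply', ih, Dop_shift, Function.iterate_succ_apply']

theorem Dop_sum {ι : Type*} (s : Finset ι) (a : A) (g : ι → A → E) :
    Dop a (fun x => ∑ k ∈ s, g k x) = fun x => ∑ k ∈ s, Dop a (g k) x := by
  funext x
  simp [Dop, Finset.sum_sub_distrib]

theorem iter_sum {ι : Type*} (s : Finset ι) (b : A) (g : ι → A → E) (m : ℕ) :
    (Dop b)^[m] (fun x => ∑ k ∈ s, g k x) = fun x => ∑ k ∈ s, (Dop b)^[m] (g k) x := by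
  induction m generalizing g with
  | zero => rfl
  | succ m ih =>
    rw [Function.iterate_succ_apply, Dop_sum, ih]
    funext x
    exact Finset.sum_congr rfl fun k _ => by rw [Function.iterate_succ_apply]

theorem Dop_const_mul (a : A) (e : E) (g : A → E) :
    Dop a (fun x => e * g x) = fun x => e * Dop a g x := by
  funext x
  simp only [Dop]
  ring

theorem iter_const_mul (b : A) (e : E) (g : A → E) (m : ℕ) :
    (Dop b)^[m] (fun x => e * g x) = fun x => e * (Dop b)^[m] g x := by
  induction m generalizing g with
  | zero => rfl
  | succ m ih =>
    rw [Function.iterate_succ_apply, Dop_const_mul, ih]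
    funext x
    rw [Function.iterate_succ_apply]

theorem HB_succ {f : A → E} {m : ℕ} (h : HB f m) : HB f (m + 1) := by
  intro l hl x
  match l, hl with
  | a :: l, hl =>
    have hl' : l.length = m := by simpa using hl
    show Dop a (l.foldr Dop f) x = 0
    simp [Dop, h l hl']

theorem HB_mono {f : A → E} {m m' : ℕ} (hm : m ≤ m') (h : HB f m) : HB f m' := by
  induction m', hm using Nat.le_induction with
  | base => exact h
  | succ m' _ ih => exact HB_succ ih

theorem iter_eq_foldr (b : A) (f : A → E) (k : ℕ) :
    (Dop b)^[k] f = (List.replicate k b).foldr Dop f := by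
  induction k with
  | zero => rfl
  | succ k ih => rw [Function.iterate_succ_apply', ih]; rfl

theorem HB_iter_zero {f : A → E} {m : ℕ} (h : HB f m) {k : ℕ} (hk : m ≤ k) (b x : A) :
    (Dop b)^[k] f x = 0 := by
  rw [iter_eq_foldr]
  exact HB_mono hk h _ List.length_replicate x

theorem HB_Dop {f : A → E} {m : ℕ} (h : HB f (m + 1)) (c : A) : HB (Dop c f) m := by
  intro l hl x
  have h2 := h (l ++ [c]) (by simp [hl]) x
  rwa [List.foldr_append] at h2

theorem HB_Dop' {f : A → E} {m : ℕ} (h : HB f m) (c : A) : HB (Dop c f) (m - 1) := by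
  cases m with
  | zero =>
    intro l hl x
    rw [List.length_eq_zero_iff.mp hl]
    show Dop c f x = 0
    have h0 : ∀ y, f y = 0 := fun y => h [] rfl y
    simp [Dop, h0]
  | succ m => exact HB_Dop h c

theorem HB_iter {f : A → E} {m : ℕ} (h : HB f m) (d : A) (k : ℕ) : HB ((Dop d)^[k] f) m := by
  induction k with
  | zero => exact h
  | succ k ih =>
    rw [Function.iterate_succ_apply']
    exact HB_Dop (HB_succ ih) d

theorem foldr_sub (f g : A → E) : ∀ l : List A,
    l.foldr Dop (f - g) = l.foldr Dop f - l.foldr Dop g := by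
  intro l
  induction l with
  | nil => rfl
  | cons c l ih => simp only [List.foldr_cons, ih, Dop_sub]

theorem HB_sub {f g : A → E} {m : ℕ} (hf : HB f m) (hg : HB g m) : HB (f - g) m := by
  intro l hl x
  rw [foldr_sub]
  simp [hf l hl x, hg l hl x]

theorem S_shift (g : A → E) (m : ℕ) (b x : A) :
    S g m (x + b) b = g x + (-1 : E) ^ m * (Dop b)^[m + 1] g x := by
  have key : ∀ k : ℕ, (-1 : E) ^ k * (Dop b)^[k] g (x + b)
      = ((-1 : E) ^ k * (Dop b)^[k] g x) - ((-1 : E) ^ (k + 1) * (Dop b)^[k + 1] g x) := by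
    intro k
    have h1 : (Dop b)^[k + 1] g x = (Dop b)^[k] g (x + b) - (Dop b)^[k] g x := by
      rw [Function.iterate_succ_apply']; rfl
    rw [pow_succ, h1]
    ring
  calc S g m (x + b) b
      = ∑ k ∈ Finset.range (m + 1),
          (((-1 : E) ^ k * (Dop b)^[k] g x) - ((-1 : E) ^ (k + 1) * (Dop b)^[k + 1] g x)) :=
        Finset.sum_congr rfl fun k _ => key k
    _ = (-1 : E) ^ 0 * (Dop b)^[0] g x - (-1 : E) ^ (m + 1) * (Dop b)^[m + 1] g x :=
        Finset.sum_range_sub' (fun k => (-1 : E) ^ k * (Dop b)^[k] g x) (m + 1)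
    _ = g x + (-1 : E) ^ m * (Dop b)^[m + 1] g x := by
        simp [pow_succ]

theorem S_shift' {g : A → E} {m : ℕ} (hg : HB g (m + 1)) (x b : A) :
    S g m (x + b) b = g x := by
  rw [S_shift, HB_iter_zero hg le_rfl b x]
  ring

theorem S_translate {f : A → E} {n : ℕ} (hf : HB f (n + 1)) (a b c : A) :
    S f n (a + c) (b + c) = S f n a b := by
  set g : A → E := (fun x => S f n (x + c) (b + c)) - (fun x => S f n x b) with hgdef
  have hg0 : ∀ x, g (x + b) = 0 := by
    intro x
    have e1 : S f n (x + b + c) (b + c) = f x := by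
      rw [add_assoc]; exact S_shift' hf x (b + c)
    have e2 : S f n (x + b) b = f x := S_shift' hf x b
    simp [hgdef, e1, e2]
  have hDg : ∀ x, (Dop b)^[n + 1] g x = 0 := by
    intro x
    rw [hgdef, iter_sub]
    have h1 : (Dop b)^[n + 1] (fun x => S f n (x + c) (b + c)) x = 0 := by
      have hfun : (fun x => S f n (x + c) (b + c)) =
          fun x => ∑ k ∈ Finset.range (n + 1),
            (fun k x => (-1 : E) ^ k * ((Dop (b + c))^[k] f) (x + c)) k x := rfl
      rw [hfun, iter_sum]
      refine Finset.sum_eq_zero fun k _ => ?_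
      rw [iter_const_mul, iter_shift]
      beta_reduce
      rw [HB_iter_zero (HB_iter hf (b + c) k) le_rfl b (x + c)]
      ring
    have h2 : (Dop b)^[n + 1] (fun x => S f n x b) x = 0 := by
      have hfun : (fun x => S f n x b) =
          fun x => ∑ k ∈ Finset.range (n + 1),
            (fun k x => (-1 : E) ^ k * ((Dop b)^[k] f) x) k x := rfl
      rw [hfun, iter_sum]
      refine Finset.sum_eq_zero fun k _ => ?_
      rw [iter_const_mul]
      beta_reduce
      rw [HB_iter_zero (HB_iter hf b k) le_rfl b x]
      ring
    rw [Pi.sub_apply, h1, h2, sub_self]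
  have hzero : S g n (a + b) b = 0 := by
    refine Finset.sum_eq_zero fun k _ => ?_
    have e1 : (Dop b)^[k] g (a + b) = (Dop b)^[k] (fun y => g (y + b)) a := by
      rw [iter_shift]
    have e2 : (fun y => g (y + b)) = (0 : A → E) := funext fun y => hg0 y
    rw [e1, e2, iter_zero_fun]
    simp
  have key := S_shift g n b a
  rw [hzero, hDg a] at key
  have hga : g a = 0 := by simpa using key.symm
  have h3 : S f n (a + c) (b + c) - S f n a b = 0 := hga
  exact sub_eq_zero.mp h3

theorem S_sub (f g : A → E) (n : ℕ) (a b : A) :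
    S (f - g) n a b = S f n a b - S g n a b := by
  unfold S
  rw [← Finset.sum_sub_distrib]
  refine Finset.sum_congr rfl fun k _ => ?_
  rw [iter_sub]
  simp only [Pi.sub_apply]
  ring

theorem S_zero_fun (n : ℕ) (a b : A) : S (0 : A → E) n a b = 0 := by
  refine Finset.sum_eq_zero fun k _ => ?_
  rw [iter_zero_fun]
  simp

theorem S_diff_left (f : A → E) (n : ℕ) (a p d : A) :
    S f n (a + p) d - S f n a d = S (Dop p f) n a d := by
  unfold S
  rw [← Finset.sum_sub_distrib]
  refine Finset.sum_congr rfl fun k _ => ?_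
  rw [← mul_sub]
  congr 1
  rw [← iter_comm]
  rfl

theorem Dop_zero (f : A → E) : Dop (0 : A) f = 0 := by
  funext x; simp [Dop]

theorem S_zero_right (f : A → E) (n : ℕ) (a : A) : S f n a 0 = f a := by
  unfold S
  rw [Finset.sum_eq_single 0]
  · simp
  · intro k hk hk0
    obtain ⟨j, rfl⟩ := Nat.exists_eq_succ_of_ne_zero hk0
    rw [Function.iterate_succ_apply, Dop_zero, iter_zero_fun]
    simp
  · intro h
    exact absurd (Finset.mem_range.mpr (Nat.succ_pos n)) h

section Hom

variable {A Abar E : Type*} [CommSemiring A] [CommRing Abar] [CommRing E] (i : A →+* Abar)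

theorem foldr_comp (g : Abar → E) : ∀ (l : List A) (x : A),
    (l.map i).foldr Dop g (i x) = l.foldr Dop (g ∘ i) x := by
  intro l
  induction l with
  | nil => intro x; rfl
  | cons c l ih =>
    intro x
    show (l.map i).foldr Dop g (i x + i c) - (l.map i).foldr Dop g (i x)
      = l.foldr Dop (g ∘ i) (x + c) - l.foldr Dop (g ∘ i) x
    rw [← map_add, ih, ih]

theorem iter_comp (g : Abar → E) (b : A) (k : ℕ) : ∀ a : A,
    (Dop (i b))^[k] g (i a) = (Dop b)^[k] (g ∘ i) a := by
  induction k with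
  | zero => intro a; rfl
  | succ k ih =>
    intro a
    rw [Function.iterate_succ_apply', Function.iterate_succ_apply']
    show (Dop (i b))^[k] g (i a + i b) - (Dop (i b))^[k] g (i a)
      = (Dop b)^[k] (g ∘ i) (a + b) - (Dop b)^[k] (g ∘ i) a
    rw [← map_add, ih, ih]

theorem unique_ext (hgen : ∀ x : Abar, ∃ a b : A, x = i a - i b)
    (g1 g2 : Abar → E) (k1 k2 : ℕ) (h1 : HB g1 (k1 + 1)) (h2 : HB g2 (k2 + 1))
    (heq : g1 ∘ i = g2 ∘ i) : g1 = g2 := by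
  funext x
  obtain ⟨a, b, rfl⟩ := hgen x
  set k := max k1 k2 with hk
  have h1' : HB g1 (k + 1) := HB_mono (Nat.succ_le_succ (le_max_left _ _)) h1
  have h2' : HB g2 (k + 1) := HB_mono (Nat.succ_le_succ (le_max_right _ _)) h2
  have key : ∀ g : Abar → E, HB g (k + 1) →
      g (i a - i b) = ∑ j ∈ Finset.range (k + 1), (-1 : E) ^ j * (Dop b)^[j] (g ∘ i) a := by
    intro g hg
    have e0 : i a - i b + i b = (i a : Abar) := sub_add_cancel _ _
    have hs := S_shift' hg (i a - i b) (i b)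
    rw [e0] at hs
    rw [← hs]
    exact Finset.sum_congr rfl fun j _ => by rw [iter_comp]
  rw [key g1 h1', key g2 h2', heq]

end Hom

end Stmt8Aux

/-- Theorem of Dress: if `f : A → E` is algebraic of degree `n` and `i : A → Ā` is the
canonical (injective, with differences generating) map into the Grothendieck ring `Ā`,
then there is a unique algebraic map `f̄ : Ā → E` with `f̄ ∘ i = f`; moreover `f̄` is
algebraic of degree `n`, and is multiplicative whenever `f` is. -/
theorem stmt8 {A Abar E : Type*} [CommSemiring A] [CommRing Abar] [CommRing E]
    (i : A →+* Abar) (hinj : Function.Injective i)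
    (hgen : ∀ x : Abar, ∃ a b : A, x = i a - i b)
    (f : A → E) (n : ℕ) (hf : IsAlgDeg f n) :
    ∃ fbar : Abar → E,
      (fbar ∘ i = f) ∧ IsAlgDeg fbar n ∧
      (∀ gbar : Abar → E, (gbar ∘ i = f ∧ ∃ k : ℕ, AlgBound gbar k) → gbar = fbar) ∧
      ((∀ x y : A, f (x * y) = f x * f y) →
        ∀ x y : Abar, fbar (x * y) = fbar x * fbar y) := by
  classical
  have HBf : Stmt8Aux.HB f (n + 1) := hf.1
  have hgen0 := hgen
  choose ga gb hg using hgen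
  set fbar : Abar → E := fun x => Stmt8Aux.S f n (ga x) (gb x) with hfbar
  -- injectivity consequence
  have hadd : ∀ a b a' b' : A, i a - i b = i a' - i b' → a + b' = a' + b := by
    intro a b a' b' h
    apply hinj
    rw [map_add, map_add]
    exact sub_eq_sub_iff_add_eq_add.mp h
  -- the value of fbar on differences
  have hval : ∀ a b : A, fbar (i a - i b) = Stmt8Aux.S f n a b := by
    intro a b
    have h1 : i (ga (i a - i b)) - i (gb (i a - i b)) = i a - i b := (hg _).symm
    have h2 : ga (i a - i b) + b = a + gb (i a - i b) := hadd _ _ _ _ h1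
    calc fbar (i a - i b)
        = Stmt8Aux.S f n (ga (i a - i b)) (gb (i a - i b)) := rfl
      _ = Stmt8Aux.S f n (ga (i a - i b) + b) (gb (i a - i b) + b) :=
          (Stmt8Aux.S_translate HBf _ _ _).symm
      _ = Stmt8Aux.S f n (a + gb (i a - i b)) (b + gb (i a - i b)) := by
          rw [h2, add_comm (gb (i a - i b)) b]
      _ = Stmt8Aux.S f n a b := Stmt8Aux.S_translate HBf _ _ _
  -- fbar extends f
  have hcomp : fbar ∘ i = f := by
    funext a
    show fbar (i a) = f a
    have h0 : (i a : Abar) = i a - i 0 := by simp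
    rw [h0, hval a 0, Stmt8Aux.S_zero_right]
  -- the representation of iterated differences of fbar
  have hrep : ∀ l : List Abar, ∃ (h : A → E) (t : A),
      Stmt8Aux.HB h (n + 1 - l.length) ∧
      ∀ a b : A, l.foldr Dop fbar (i a - i b) = Stmt8Aux.S h n a (b + t) := by
    intro l
    induction l with
    | nil =>
      exact ⟨f, 0, by simpa using HBf, fun a b => by rw [add_zero]; exact hval a b⟩
    | cons cb l ih =>
      obtain ⟨h, t, hHB, hr⟩ := ih
      refine ⟨Dop (ga cb) h - Dop (gb cb) h, t + gb cb, ?_, ?_⟩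
      · rw [List.length_cons, ← Nat.sub_sub]
        exact Stmt8Aux.HB_sub (Stmt8Aux.HB_Dop' hHB _) (Stmt8Aux.HB_Dop' hHB _)
      · intro a b
        have hHB' : Stmt8Aux.HB h (n + 1) := Stmt8Aux.HB_mono (Nat.sub_le _ _) hHB
        have step : (cb :: l).foldr Dop fbar (i a - i b)
            = l.foldr Dop fbar ((i a - i b) + cb) - l.foldr Dop fbar (i a - i b) := rfl
        have harg : (i a - i b) + cb = i (a + ga cb) - i (b + gb cb) := by
          rw [map_add, map_add]
          linear_combination hg cb
        rw [step, harg, hr, hr]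
        have e1 : (b + gb cb) + t = (b + t) + gb cb := by ring
        have e2 : b + (t + gb cb) = (b + t) + gb cb := by ring
        rw [e1, e2]
        have d1 := Stmt8Aux.S_diff_left h n a (ga cb) ((b + t) + gb cb)
        have d2 := (Stmt8Aux.S_translate hHB' a (b + t) (gb cb)).symm
        have d3 := Stmt8Aux.S_diff_left h n a (gb cb) ((b + t) + gb cb)
        rw [Stmt8Aux.S_sub, ← d1, ← d3, d2]
        ring
  -- fbar is algebraic of degree ≤ n
  have halg : AlgBound fbar n := by
    intro l hl x
    obtain ⟨h, t, hHB, hr⟩ := hrep l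
    have hh0 : h = 0 := by
      funext y
      have := hHB [] (by simp [hl]) y
      simpa using this
    rw [hg x, hr, hh0, Stmt8Aux.S_zero_fun]
  -- minimality of the degree
  have hmin : ∀ m, AlgBound fbar m → n ≤ m := by
    intro m hm
    refine hf.2 m ?_
    intro l hl x
    have hc := Stmt8Aux.foldr_comp i fbar l x
    rw [hcomp] at hc
    rw [← hc]
    exact hm (l.map i) (by simp [hl]) (i x)
  -- uniqueness
  have huniq : ∀ gbar : Abar → E, (gbar ∘ i = f ∧ ∃ k : ℕ, AlgBound gbar k) → gbar = fbar := by
    rintro gbar ⟨hgc, k, hgk⟩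
    exact Stmt8Aux.unique_ext i hgen0 gbar fbar k n hgk halg (by rw [hgc, hcomp])
  -- multiplicativity
  have hmulpart : (∀ x y : A, f (x * y) = f x * f y) →
      ∀ x y : Abar, fbar (x * y) = fbar x * fbar y := by
    intro hm x y
    have hM : ∀ (a : A) (k : ℕ) (u v : A),
        (Dop (a * v))^[k] f (a * u) = f a * (Dop v)^[k] f u := by
      intro a k
      induction k with
      | zero => intro u v; simp [hm]
      | succ k ih =>
        intro u v
        rw [Function.iterate_succ_apply', Function.iterate_succ_apply']
        show (Dop (a * v))^[k] f (a * u + a * v) - (Dop (a * v))^[k] f (a * u)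
          = f a * ((Dop v)^[k] f (u + v) - (Dop v)^[k] f u)
        rw [← mul_add, ih, ih]
        ring
    have hSmul : ∀ a c d : A, Stmt8Aux.S f n (a * c) (a * d) = f a * Stmt8Aux.S f n c d := by
      intro a c d
      unfold Stmt8Aux.S
      rw [Finset.mul_sum]
      exact Finset.sum_congr rfl fun k _ => by rw [hM]; ring
    obtain ⟨c, d, rfl⟩ := hgen0 y
    set yy : Abar := i c - i d with hyy
    have hfoldr1 : ∀ (l : List Abar) (x : Abar),
        l.foldr Dop (fun z => fbar (z * yy)) x
          = (l.map (· * yy)).foldr Dop fbar (x * yy) := by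
      intro l
      induction l with
      | nil => intro x; rfl
      | cons e l ih =>
        intro x
        show l.foldr Dop (fun z => fbar (z * yy)) (x + e)
              - l.foldr Dop (fun z => fbar (z * yy)) x
          = (l.map (· * yy)).foldr Dop fbar (x * yy + e * yy)
              - (l.map (· * yy)).foldr Dop fbar (x * yy)
        rw [ih, ih, add_mul]
    have h1 : Stmt8Aux.HB (fun z : Abar => fbar (z * yy)) (n + 1) := by
      intro l hl x
      rw [hfoldr1]
      exact halg (l.map _) (by simp [hl]) _
    have hfoldr2 : ∀ (l : List Abar) (F : Abar → E) (e : E) (x : Abar),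
        l.foldr Dop (fun z => F z * e) x = l.foldr Dop F x * e := by
      intro l
      induction l with
      | nil => intro F e x; rfl
      | cons cc l ih =>
        intro F e x
        show l.foldr Dop (fun z => F z * e) (x + cc) - l.foldr Dop (fun z => F z * e) x
          = (l.foldr Dop F (x + cc) - l.foldr Dop F x) * e
        rw [ih, ih]
        ring
    have h2 : Stmt8Aux.HB (fun z : Abar => fbar z * fbar yy) (n + 1) := by
      intro l hl x
      rw [hfoldr2, halg l hl x]
      ring
    have heq12 : (fun z : Abar => fbar (z * yy)) ∘ i = (fun z : Abar => fbar z * fbar yy) ∘ i := by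
      funext a
      show fbar (i a * yy) = fbar (i a) * fbar yy
      have e1 : i a * yy = i (a * c) - i (a * d) := by
        rw [hyy, map_mul, map_mul]; ring
      have e3 : fbar (i a) = f a := congrFun hcomp a
      rw [e1, hval, hSmul, e3, hyy, hval c d]
    have hfin := Stmt8Aux.unique_ext i hgen0 _ _ n n h1 h2 heq12
    exact congrFun hfin x
  exact ⟨fbar, hcomp, ⟨halg, hmin⟩, huniq, hmulpart⟩
end

section
/- For a right-free (K,G)-biset V and a right-free (G,H)-biset U, the composite biset V ×_G U is right-free over H, and there is a natural isomorphism of K-sets s_{V ×_G U}(X) ≅ s_V(s_U(X)) for every H-set X. -/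
/-- The tensor-induced action on `Xⁿ`: given the wreath-product data `π, h` coming from a
right-free `(G,H)`-biset with chosen orbit representatives, and an `H`-action `act` on `X`,
`g` acts on `x : Fin n → X` by `(g·x)ᵢ = h_{π⁻¹(i)} · x_{π⁻¹(i)}`. -/
def sAct {G H X : Type*} [Group G] {n : ℕ} (π : G → Equiv.Perm (Fin n))
    (h : G → Fin n → H) (act : H → X → X) (g : G) (x : Fin n → X) : Fin n → X :=
  fun i => act (h g ((π g)⁻¹ i)) (x ((π g)⁻¹ i))

open MulOpposite

/-- The relation whose quotient is the composite biset `V ×_G U`: `(v,u) ~ (vg, g⁻¹u)`. -/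
def bisetRel (G : Type*) [Group G] {V U : Type*} [MulAction Gᵐᵒᵖ V] [MulAction G U]
    (p q : V × U) : Prop :=
  ∃ g : G, q.1 = op g • p.1 ∧ q.2 = g⁻¹ • p.2

/-- The composite biset `V ×_G U`. -/
def CompositeBiset (G : Type*) [Group G] (V U : Type*) [MulAction Gᵐᵒᵖ V]
    [MulAction G U] : Type _ :=
  Quot (bisetRel G (V := V) (U := U))

/-- The left `K`-action on `V ×_G U`, `k·[v,u] = [k·v, u]`. -/
def leftK {K G V U : Type*} [Group K] [Group G]
    [MulAction K V] [MulAction Gᵐᵒᵖ V] [SMulCommClass K Gᵐᵒᵖ V] [MulAction G U]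
    (k : K) : CompositeBiset G V U → CompositeBiset G V U :=
  Quot.lift (fun p => Quot.mk _ (k • p.1, p.2)) (by
    rintro a b ⟨g, h1, h2⟩
    exact Quot.sound ⟨g, by rw [h1]; exact smul_comm _ _ _, h2⟩)

/-- The right `H`-action on `V ×_G U`, `[v,u]·b = [v, u·b]`. -/
def rightH {G H V U : Type*} [Group G] [Group H]
    [MulAction Gᵐᵒᵖ V] [MulAction G U] [MulAction Hᵐᵒᵖ U] [SMulCommClass G Hᵐᵒᵖ U]
    (b : H) : CompositeBiset G V U → CompositeBiset G V U :=
  Quot.lift (fun p => Quot.mk _ (p.1, op b • p.2)) (by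
    rintro a c ⟨g, h1, h2⟩
    refine Quot.sound ⟨g, h1, ?_⟩
    rw [h2]; exact (smul_comm _ _ _).symm)

section Aux

variable {K G H V U : Type*} [Group K] [Group G] [Group H]
    [MulAction K V] [MulAction Gᵐᵒᵖ V] [SMulCommClass K Gᵐᵒᵖ V]
    [MulAction G U] [MulAction Hᵐᵒᵖ U] [SMulCommClass G Hᵐᵒᵖ U]

theorem bisetRel_equivalence : Equivalence (bisetRel G (V := V) (U := U)) := by
  constructor
  · intro p; exact ⟨1, by simp, by simp⟩
  · rintro p q ⟨g, h1, h2⟩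
    refine ⟨g⁻¹, ?_, ?_⟩
    · rw [h1, smul_smul, ← op_mul]; simp
    · rw [h2, smul_smul]; simp
  · rintro p q r ⟨g, h1, h2⟩ ⟨g', h1', h2'⟩
    refine ⟨g * g', ?_, ?_⟩
    · rw [h1', h1, smul_smul, ← op_mul]
    · rw [h2', h2, smul_smul, mul_inv_rev]

theorem biset_mk_eq {p q : V × U} :
    (Quot.mk (bisetRel G) p : CompositeBiset G V U) = Quot.mk (bisetRel G) q ↔
      bisetRel G p q :=
  Quot.eq.trans bisetRel_equivalence.eqvGen_iff

theorem biset_mk_move (g : G) (x : V) (y : U) :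
    (Quot.mk (bisetRel G) (op g • x, y) : CompositeBiset G V U) =
      Quot.mk (bisetRel G) (x, g • y) :=
  (Quot.sound ⟨g, rfl, by simp⟩).symm

theorem rightH_mk (b : H) (p : V × U) :
    rightH b (Quot.mk (bisetRel G) p : CompositeBiset G V U) =
      Quot.mk (bisetRel G) (p.1, op b • p.2) := rfl

theorem rightH_rightH (b c : H) (x : CompositeBiset G V U) :
    rightH b (rightH (G := G) c x) = rightH (c * b) x := by
  induction x using Quot.ind with
  | _ p => simp [rightH_mk, smul_smul, ← op_mul]; rfl

theorem rightH_one (x : CompositeBiset G V U) : rightH (G := G) (1 : H) x = x := by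
  induction x using Quot.ind with
  | _ p => simp [rightH_mk]; rfl

theorem leftK_mk (k : K) (p : V × U) :
    leftK k (Quot.mk (bisetRel G) p : CompositeBiset G V U) =
      Quot.mk (bisetRel G) (k • p.1, p.2) := rfl

theorem leftK_rightH (k : K) (b : H) (x : CompositeBiset G V U) :
    leftK k (rightH (G := G) b x) = rightH b (leftK (G := G) k x) := by
  induction x using Quot.ind with
  | _ p => rfl

end Aux

/-- For a right-free `(K,G)`-biset `V` and a right-free `(G,H)`-biset `U`, the composite
`V ×_G U` is right-free over `H`, and `s_{V ×_G U}(X) ≅ s_V(s_U(X))` as `K`-sets, for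
every `H`-set `X` (for any choice of tensor-induction data on the composite biset). -/
theorem stmt11 {K G H V U : Type*} [Group K] [Group G] [Group H] [Finite V] [Finite U]
    [MulAction K V] [MulAction Gᵐᵒᵖ V] [SMulCommClass K Gᵐᵒᵖ V]
    [MulAction G U] [MulAction Hᵐᵒᵖ U] [SMulCommClass G Hᵐᵒᵖ U]
    (hfreeV : ∀ (x : V) (g g' : G), op g • x = op g' • x → g = g')
    (hfreeU : ∀ (x : U) (b b' : H), op b • x = op b' • x → b = b')
    {nV nU : ℕ} (v : Fin nV → V) (u : Fin nU → U)
    (hrepsV : ∀ x : V, ∃! i : Fin nV, ∃ g : G, x = op g • v i)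
    (hrepsU : ∀ x : U, ∃! i : Fin nU, ∃ b : H, x = op b • u i)
    (πV : K → Equiv.Perm (Fin nV)) (hV : K → Fin nV → G)
    (hcV : ∀ (k : K) (i : Fin nV), k • v i = op (hV k i) • v (πV k i))
    (πU : G → Equiv.Perm (Fin nU)) (hU : G → Fin nU → H)
    (hcU : ∀ (g : G) (i : Fin nU), g • u i = op (hU g i) • u (πU g i))
    (X : Type*) [MulAction H X] :
    (∀ (x : CompositeBiset G V U) (b b' : H), rightH b x = rightH b' x → b = b') ∧
    ∀ {N : ℕ} (w : Fin N → CompositeBiset G V U)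
      (πW : K → Equiv.Perm (Fin N)) (hW : K → Fin N → H),
      (∀ x : CompositeBiset G V U, ∃! i : Fin N, ∃ b : H, x = rightH b (w i)) →
      (∀ (k : K) (i : Fin N), leftK k (w i) = rightH (hW k i) (w (πW k i))) →
      ∃ e : (Fin N → X) ≃ (Fin nV → Fin nU → X),
        ∀ (k : K) (f : Fin N → X),
          e (sAct πW hW (fun b p => b • p) k f) =
            sAct πV hV (sAct πU hU (fun b p => b • p)) k (e f) := by
  -- canonical decomposition: existence
  have hdec : ∀ x : CompositeBiset G V U, ∃ (i : Fin nV) (j : Fin nU) (b : H),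
      x = rightH b (Quot.mk (bisetRel G) (v i, u j)) := by
    intro x
    induction x using Quot.ind with
    | _ p =>
      obtain ⟨a, y⟩ := p
      obtain ⟨i, ⟨g, hg⟩, -⟩ := hrepsV a
      obtain ⟨j, ⟨b, hb⟩, -⟩ := hrepsU (g • y)
      refine ⟨i, j, b, ?_⟩
      rw [rightH_mk]
      calc (Quot.mk (bisetRel G) (a, y) : CompositeBiset G V U)
          = Quot.mk (bisetRel G) (op g • v i, y) := by rw [hg]
        _ = Quot.mk (bisetRel G) (v i, g • y) := biset_mk_move g (v i) y
        _ = Quot.mk (bisetRel G) (v i, op b • u j) := by rw [hb]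
  -- canonical decomposition: uniqueness
  have huniq : ∀ (i i' : Fin nV) (j j' : Fin nU) (b b' : H),
      rightH b (Quot.mk (bisetRel G) (v i, u j) : CompositeBiset G V U) =
        rightH b' (Quot.mk (bisetRel G) (v i', u j')) →
      i = i' ∧ j = j' ∧ b = b' := by
    intro i i' j j' b b' hE
    rw [rightH_mk, rightH_mk] at hE
    obtain ⟨g, h1, h2⟩ := biset_mk_eq.mp hE
    simp only at h1 h2
    have hii : i = i' := by
      obtain ⟨i0, -, hi0⟩ := hrepsV (v i')
      have e1 : i = i0 := hi0 i ⟨g, h1⟩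
      have e2 : i' = i0 := hi0 i' ⟨1, by simp⟩
      rw [e1, e2]
    subst hii
    have hg1 : g = 1 := hfreeV (v i) g 1 (by rw [← h1]; simp)
    subst hg1
    simp only [inv_one, one_smul] at h2
    have hjj : j = j' := by
      obtain ⟨j0, -, hj0⟩ := hrepsU (u j')
      have e1 : j = j0 := by
        refine hj0 j ⟨b * b'⁻¹, ?_⟩
        have : u j' = op b'⁻¹ • op b' • u j' := by simp [smul_smul, ← op_mul]
        rw [this, h2, smul_smul, ← op_mul]
      have e2 : j' = j0 := hj0 j' ⟨1, by simp⟩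
      rw [e1, e2]
    subst hjj
    exact ⟨rfl, rfl, (hfreeU (u j) b' b h2).symm⟩
  -- freeness of the right H-action on the composite
  have hfreeW : ∀ (x : CompositeBiset G V U) (b b' : H),
      rightH b x = rightH b' x → b = b' := by
    intro x b b' hbb
    obtain ⟨i, j, c, rfl⟩ := hdec x
    erw [rightH_rightH, rightH_rightH] at hbb
    exact mul_left_cancel (huniq i i j j (c * b) (c * b') hbb).2.2
  refine ⟨hfreeW, ?_⟩
  intro N w πW hW hreps hcomp
  choose I J c hw using fun l => hdec (w l)
  -- key compatibility between the decomposition and the wreath data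
  have key : ∀ (k : K) (l : Fin N),
      I (πW k l) = πV k (I l) ∧ J (πW k l) = πU (hV k (I l)) (J l) ∧
        c (πW k l) * hW k l = hU (hV k (I l)) (J l) * c l := by
    intro k l
    have h1 := hcomp k l
    rw [hw l, hw (πW k l)] at h1
    erw [leftK_rightH, rightH_rightH] at h1
    have hL : leftK k (Quot.mk (bisetRel G) (v (I l), u (J l)) :
        CompositeBiset G V U) =
        rightH (hU (hV k (I l)) (J l))
          (Quot.mk (bisetRel G) (v (πV k (I l)), u (πU (hV k (I l)) (J l)))) := by
      rw [leftK_mk, rightH_mk]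
      calc (Quot.mk (bisetRel G) (k • v (I l), u (J l)) : CompositeBiset G V U)
          = Quot.mk (bisetRel G) (op (hV k (I l)) • v (πV k (I l)), u (J l)) := by
            rw [hcV k (I l)]
        _ = Quot.mk (bisetRel G) (v (πV k (I l)), hV k (I l) • u (J l)) :=
            biset_mk_move _ _ _
        _ = _ := by rw [hcU (hV k (I l)) (J l)]
    erw [hL, rightH_rightH] at h1
    have := huniq (πV k (I l)) (I (πW k l)) (πU (hV k (I l)) (J l)) (J (πW k l))
      (hU (hV k (I l)) (J l) * c l) (c (πW k l) * hW k l) h1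
    exact ⟨this.1.symm, this.2.1.symm, this.2.2.symm⟩
  -- the index map is a bijection
  have hbij : Function.Bijective (fun l => (I l, J l) : Fin N → Fin nV × Fin nU) := by
    constructor
    · intro l l' hll
      simp only [Prod.mk.injEq] at hll
      obtain ⟨l0, -, hl0⟩ := hreps (w l')
      have e1 : l' = l0 := hl0 l' ⟨1, (rightH_one _).symm⟩
      have e2 : l = l0 := by
        refine hl0 l ⟨(c l)⁻¹ * c l', ?_⟩
        erw [hw l', hw l, hll.1, hll.2, rightH_rightH]
        congr 1
        group
      rw [e2, e1]
    · intro ⟨i, j⟩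
      obtain ⟨l, ⟨b, hb⟩, -⟩ := hreps (Quot.mk (bisetRel G) (v i, u j))
      erw [hw l, rightH_rightH] at hb
      have := huniq i (I l) j (J l) 1 (c l * b)
        (by erw [rightH_one]; exact hb)
      exact ⟨l, Prod.ext this.1.symm this.2.1.symm⟩
  let lam : Fin N ≃ Fin nV × Fin nU := Equiv.ofBijective _ hbij
  have lam_apply : ∀ l, lam l = (I l, J l) := fun _ => rfl
  refine ⟨{
    toFun := fun f i j => c (lam.symm (i, j)) • f (lam.symm (i, j))
    invFun := fun F l => (c l)⁻¹ • F (I l) (J l)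
    left_inv := by
      intro f
      funext l
      have : lam.symm (I l, J l) = l := by rw [← lam_apply, Equiv.symm_apply_apply]
      simp [this, smul_smul]
    right_inv := by
      intro F
      funext i j
      have h1 : (I (lam.symm (i, j)), J (lam.symm (i, j))) = (i, j) := by
        rw [← lam_apply, Equiv.apply_symm_apply]
      have h2 : I (lam.symm (i, j)) = i := congrArg Prod.fst h1
      have h3 : J (lam.symm (i, j)) = j := congrArg Prod.snd h1
      simp [smul_smul, h2, h3] }, ?_⟩
  intro k f
  funext i j
  simp only [Equiv.coe_fn_mk, sAct]
  set l : Fin N := lam.symm (i, j) with hl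
  set l₁ : Fin N := (πW k)⁻¹ l with hl₁
  have hπ : πW k l₁ = l := by rw [hl₁]; exact (πW k).apply_symm_apply l
  obtain ⟨k1, k2, k3⟩ := key k l₁
  rw [hπ] at k1 k2 k3
  have hIl : (I l, J l) = (i, j) := by rw [← lam_apply, hl, Equiv.apply_symm_apply]
  have hIl1 : I l = i := congrArg Prod.fst hIl
  have hJl1 : J l = j := congrArg Prod.snd hIl
  have hi' : (πV k)⁻¹ i = I l₁ := by
    rw [← hIl1, k1]; exact (πV k).symm_apply_apply _
  have hj' : (πU (hV k (I l₁)))⁻¹ j = J l₁ := by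
    rw [← hJl1, k2]; exact (πU (hV k (I l₁))).symm_apply_apply _
  have hlam1 : lam.symm (I l₁, J l₁) = l₁ := by
    rw [← lam_apply, Equiv.symm_apply_apply]
  rw [hi', hj', hlam1]
  rw [smul_smul, smul_smul, ← k3]
end

section
/- For a right-free (G,H)-biset U and a representation RH-module M over a commutative ring R, tensor induction commutes with duality: t_U(M°) ≅ t_U(M)° as RG-modules, naturally in M, where M° = Hom_R(M, R). -/
open scoped TensorProduct

/-- Tensor induction of modules: `t_U(M) = M^{⊗n}` with `G`-action
`g·(m₁⊗⋯⊗mₙ) = (h_{π⁻¹(1)}m_{π⁻¹(1)})⊗⋯⊗(h_{π⁻¹(n)}m_{π⁻¹(n)})`, where `π, h` is the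
wreath-product data of the right-free biset `U` and `ρ` gives the `H`-action on `M`. -/
noncomputable def tInd {G H R M : Type*} [Group G] [CommRing R]
    [AddCommGroup M] [Module R M] {n : ℕ}
    (π : G → Equiv.Perm (Fin n)) (h : G → Fin n → H)
    (ρ : H → (M ≃ₗ[R] M)) (g : G) :
    (⨂[R] _ : Fin n, M) ≃ₗ[R] (⨂[R] _ : Fin n, M) :=
  (PiTensorProduct.reindex R (fun _ : Fin n => M) (π g)).trans
    (PiTensorProduct.congr fun i => ρ (h g ((π g)⁻¹ i)))

open MulOpposite

open PiTensorProduct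

section Pair

variable {R M : Type*} [CommRing R] [AddCommGroup M] [Module R M] {n : ℕ}

noncomputable def pairMap :
    (⨂[R] _ : Fin n, Module.Dual R M) →ₗ[R] Module.Dual R (⨂[R] _ : Fin n, M) :=
  (LinearMap.llcomp R (⨂[R] _ : Fin n, M) (⨂[R] _ : Fin n, R) R
    (PiTensorProduct.constantBaseRingEquiv (Fin n) R).toLinearMap) ∘ₗ
      PiTensorProduct.piTensorHomMap

@[simp] lemma pairMap_tprod_tprod (f : Fin n → Module.Dual R M) (m : Fin n → M) :
    pairMap (tprod R f) (tprod R m) = ∏ i, f i (m i) := by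
  simp [pairMap]

lemma tprod_expand {κ : Type*} [Fintype κ] (w : κ → M) (c : Fin n → κ → R) :
    (tprod R fun i => ∑ k, c i k • w k)
      = ∑ v : Fin n → κ, (∏ i, c i (v i)) • tprod R fun i => w (v i) := by
  rw [MultilinearMap.map_sum]
  exact Finset.sum_congr rfl fun v _ => MultilinearMap.map_smul_univ _ _ _

end Pair


/-- Tensor induction commutes with duality: `t_U(M°) ≅ t_U(M)°` as `RG`-modules, for a
representation (finitely generated `R`-free) `RH`-module `M`. -/
theorem stmt13 {G H U R M : Type*} [Group G] [Group H] [Finite U]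
    [MulAction G U] [MulAction Hᵐᵒᵖ U] [SMulCommClass G Hᵐᵒᵖ U]
    [CommRing R] [AddCommGroup M] [Module R M] [Module.Free R M] [Module.Finite R M]
    (hfree : ∀ (x : U) (b b' : H), op b • x = op b' • x → b = b')
    {n : ℕ} (u : Fin n → U)
    (hreps : ∀ x : U, ∃! i : Fin n, ∃ b : H, x = op b • u i)
    (π : G → Equiv.Perm (Fin n)) (h : G → Fin n → H)
    (hcompat : ∀ (g : G) (i : Fin n), g • u i = op (h g i) • u (π g i))
    (ρ : H →* (M ≃ₗ[R] M)) :
    ∃ e : (⨂[R] _ : Fin n, Module.Dual R M) ≃ₗ[R] Module.Dual R (⨂[R] _ : Fin n, M),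
      ∀ (g : G) (x : ⨂[R] _ : Fin n, Module.Dual R M),
        e (tInd π h (fun b => (ρ b⁻¹).dualMap) g x) =
          (tInd π h (fun b => ρ b) g⁻¹).dualMap (e x) := by
  classical
  -- basis of M
  set b := Module.Free.chooseBasis R M with hb
  -- the inverse map
  set ψ : Module.Dual R (⨂[R] _ : Fin n, M) →ₗ[R] (⨂[R] _ : Fin n, Module.Dual R M) :=
    { toFun := fun f => ∑ v : Fin n → Module.Free.ChooseBasisIndex R M,
        f (tprod R fun i => b (v i)) • tprod R fun i => b.coord (v i)
      map_add' := by
        intro f f'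
        simp [add_smul, Finset.sum_add_distrib]
      map_smul' := by
        intro r f
        simp [smul_smul, Finset.smul_sum] } with hψ
  have h1 : pairMap ∘ₗ ψ = LinearMap.id := by
    apply LinearMap.ext
    intro f
    ext m
    simp only [LinearMap.comp_apply, LinearMap.id_apply, hψ, LinearMap.coe_mk, AddHom.coe_mk,
      map_sum, LinearMapClass.map_smul, LinearMap.sum_apply, LinearMap.smul_apply,
      pairMap_tprod_tprod, smul_eq_mul, LinearMap.compMultilinearMap_apply]
    have hm : (tprod R m : ⨂[R] _ : Fin n, M)
        = ∑ v : Fin n → Module.Free.ChooseBasisIndex R M,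
            (∏ i, b.repr (m i) (v i)) • tprod R fun i => b (v i) := by
      rw [← tprod_expand b (fun i k => b.repr (m i) k)]
      congr 1
      funext i
      exact (b.sum_repr (m i)).symm
    rw [hm, map_sum]
    refine Finset.sum_congr rfl fun v _ => ?_
    rw [map_smul]
    simp [Module.Basis.coord_apply, mul_comm]
  have h2 : ψ ∘ₗ pairMap = LinearMap.id := by
    apply PiTensorProduct.ext
    apply MultilinearMap.ext
    intro f
    simp only [LinearMap.compMultilinearMap_apply, LinearMap.comp_apply, LinearMap.id_apply, hψ,
      LinearMap.coe_mk, AddHom.coe_mk, pairMap_tprod_tprod]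
    have hf : (tprod R f : ⨂[R] _ : Fin n, Module.Dual R M)
        = ∑ v : Fin n → Module.Free.ChooseBasisIndex R M,
            (∏ i, f i (b (v i))) • tprod R fun i => b.coord (v i) := by
      rw [← tprod_expand (fun k => b.coord k) (fun i k => f i (b k))]
      congr 1
      funext i
      exact (b.sum_dual_apply_smul_coord (f i)).symm
    rw [hf]
  set e : (⨂[R] _ : Fin n, Module.Dual R M) ≃ₗ[R] Module.Dual R (⨂[R] _ : Fin n, M) :=
    LinearEquiv.ofLinear pairMap ψ h1 h2 with he
  -- cocycle identities
  have hmul : ∀ (g g' : G) (i : Fin n),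
      π (g * g') i = π g (π g' i) ∧ h (g * g') i = h g (π g' i) * h g' i := by
    intro g g' i
    have e1 : (g * g') • u i = op (h (g * g') i) • u (π (g * g') i) := hcompat _ _
    have e2 : (g * g') • u i = op (h g (π g' i) * h g' i) • u (π g (π g' i)) := by
      calc (g * g') • u i = g • (g' • u i) := mul_smul _ _ _
        _ = g • (op (h g' i) • u (π g' i)) := by rw [hcompat]
        _ = op (h g' i) • (g • u (π g' i)) := smul_comm _ _ _
        _ = op (h g' i) • (op (h g (π g' i)) • u (π g (π g' i))) := by rw [hcompat]
        _ = op (h g (π g' i) * h g' i) • u (π g (π g' i)) := by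
            rw [smul_smul, ← op_mul]
    obtain ⟨j, -, huniq⟩ := hreps ((g * g') • u i)
    have hj1 : π (g * g') i = j := huniq _ ⟨_, e1⟩
    have hj2 : π g (π g' i) = j := huniq _ ⟨_, e2⟩
    have hππ : π (g * g') i = π g (π g' i) := hj1.trans hj2.symm
    refine ⟨hππ, ?_⟩
    rw [← hππ] at e2
    exact hfree (u (π (g * g') i)) _ _ (e1.symm.trans e2)
  have hone : ∀ i : Fin n, π 1 i = i ∧ h 1 i = 1 := by
    intro i
    have e1 : u i = op (h 1 i) • u (π 1 i) := by simpa using hcompat 1 i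
    obtain ⟨j, -, huniq⟩ := hreps (u i)
    have hj1 : i = j := huniq i ⟨1, by simp⟩
    have hj2 : π 1 i = j := huniq _ ⟨_, e1⟩
    have hπ : π 1 i = i := hj2.trans hj1.symm
    refine ⟨hπ, ?_⟩
    rw [hπ] at e1
    exact hfree (u i) _ _ (e1.symm.trans (by simp))
  have hπinv : ∀ g : G, π g⁻¹ = (π g)⁻¹ := by
    intro g
    apply Equiv.ext
    intro i
    apply (π g).injective
    have := (hmul g g⁻¹ i).1
    rw [mul_inv_cancel, (hone i).1] at this
    rw [← this]
    simp
  have hhinv : ∀ (g : G) (i : Fin n), h g⁻¹ i = (h g ((π g)⁻¹ i))⁻¹ := by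
    intro g i
    have := (hmul g g⁻¹ i).2
    rw [mul_inv_cancel, (hone i).2, hπinv] at this
    exact (inv_eq_of_mul_eq_one_right this.symm).symm
  refine ⟨e, ?_⟩
  intro g
  suffices hs : e.toLinearMap ∘ₗ (tInd π h (fun b => (ρ b⁻¹).dualMap) g).toLinearMap
      = ((tInd π h (fun b => ρ b) g⁻¹).dualMap.toLinearMap) ∘ₗ e.toLinearMap by
    intro x
    exact LinearMap.congr_fun hs x
  apply PiTensorProduct.ext
  apply MultilinearMap.ext
  intro f
  ext m
  simp only [LinearMap.compMultilinearMap_apply, LinearMap.comp_apply, LinearEquiv.coe_coe,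
    tInd, LinearEquiv.trans_apply, reindex_tprod, congr_tprod, he,
    LinearEquiv.ofLinear_apply, pairMap_tprod_tprod, LinearEquiv.dualMap_apply,
    LinearMap.dualMap_apply]
  rw [hπinv, inv_inv]
  simp only [hhinv, map_inv, Equiv.Perm.inv_def, Equiv.symm_symm, Equiv.symm_apply_apply,
    Equiv.apply_symm_apply]
  rw [← Equiv.prod_comp (π g).symm (fun i => (f i) ((ρ (h g i))⁻¹ (m ((π g) i))))]
  exact Finset.prod_congr rfl fun x _ => by rw [Equiv.apply_symm_apply]
end

section
/- For a right-free (G,H)-biset U and a finite H-set X, there is a natural isomorphism of RG-modules t_U(RX) ≅ R·s_U(X), i.e., tensor induction of a permutation module is the permutation module of the tensor-induced set. -/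
open scoped TensorProduct

open MulOpposite

open PiTensorProduct in
noncomputable def myF {R X : Type*} [CommRing R] [Fintype X] (n : ℕ) :
    MultilinearMap R (fun _ : Fin n => X →₀ R) ((Fin n → X) →₀ R) :=
  ((Finsupp.linearEquivFunOnFinite R R (Fin n → X)).symm.toLinearMap).compMultilinearMap
    (MultilinearMap.pi fun p : Fin n → X =>
      (MultilinearMap.mkPiAlgebra R (Fin n) R).compLinearMap fun i => Finsupp.lapply (p i))

lemma myF_single {R X : Type*} [CommRing R] [Fintype X] {n : ℕ} (v : Fin n → X) :
    myF (R := R) n (fun i => Finsupp.single (v i) 1) = Finsupp.single v 1 := by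
  classical
  ext p
  show (∏ i, (Finsupp.single (v i) (1:R)) (p i)) = _
  simp only [Finsupp.single_apply]
  rw [Fintype.prod_boole]
  simp [funext_iff, eq_comm]

noncomputable def myFwd {R X : Type*} [CommRing R] [Fintype X] (n : ℕ) :
    (⨂[R] _ : Fin n, (X →₀ R)) →ₗ[R] ((Fin n → X) →₀ R) :=
  PiTensorProduct.lift (myF n)

open PiTensorProduct in
noncomputable def myInv {R X : Type*} [CommRing R] [Fintype X] (n : ℕ) :
    ((Fin n → X) →₀ R) →ₗ[R] (⨂[R] _ : Fin n, (X →₀ R)) :=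
  Finsupp.lift _ R _ (fun p : Fin n → X => tprod R fun i => Finsupp.single (p i) (1:R))

open PiTensorProduct in
lemma myInv_single {R X : Type*} [CommRing R] [Fintype X] {n : ℕ} (v : Fin n → X) :
    myInv (R := R) n (Finsupp.single v 1) = tprod R fun i => Finsupp.single (v i) (1:R) := by
  simp [myInv]

open PiTensorProduct in
noncomputable def myEquiv {R X : Type*} [CommRing R] [Fintype X] (n : ℕ) :
    (⨂[R] _ : Fin n, (X →₀ R)) ≃ₗ[R] ((Fin n → X) →₀ R) :=
  LinearEquiv.ofLinear (myFwd n) (myInv n)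
    (by
      apply Finsupp.lhom_ext
      intro v r
      have : (Finsupp.single v r : (Fin n → X) →₀ R) = r • Finsupp.single v 1 := by
        simp [Finsupp.smul_single]
      rw [this]
      simp only [map_smul, LinearMap.comp_apply, LinearMap.id_apply, myInv_single]
      rw [show myFwd (R := R) (X := X) n (tprod R fun i => Finsupp.single (v i) 1)
          = Finsupp.single v 1 from by simp [myFwd, myF_single]])
    (by
      apply PiTensorProduct.ext
      apply Module.Basis.ext_multilinear (fun _ => Finsupp.basisSingleOne)
      intro v
      simp only [LinearMap.compMultilinearMap_apply, LinearMap.comp_apply, LinearMap.id_apply,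
        Finsupp.coe_basisSingleOne]
      rw [show myFwd (R := R) (X := X) n (tprod R fun i => Finsupp.single (v i) 1)
          = Finsupp.single v 1 from by simp [myFwd, myF_single], myInv_single])

open PiTensorProduct in
lemma myEquiv_tprod_single {R X : Type*} [CommRing R] [Fintype X] {n : ℕ} (v : Fin n → X) :
    myEquiv (R := R) n (tprod R fun i => Finsupp.single (v i) (1:R)) = Finsupp.single v 1 := by
  simp [myEquiv, myFwd, myF_single]

/-- Tensor induction of a permutation module is the permutation module of the
tensor-induced set: `t_U(RX) ≅ R·s_U(X)` as `RG`-modules. -/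
theorem stmt14 {G H U R X : Type*} [Group G] [Group H] [Finite U]
    [MulAction G U] [MulAction Hᵐᵒᵖ U] [SMulCommClass G Hᵐᵒᵖ U]
    [CommRing R] [Fintype X] [MulAction H X]
    (hfree : ∀ (x : U) (b b' : H), op b • x = op b' • x → b = b')
    {n : ℕ} (u : Fin n → U)
    (hreps : ∀ x : U, ∃! i : Fin n, ∃ b : H, x = op b • u i)
    (π : G → Equiv.Perm (Fin n)) (h : G → Fin n → H)
    (hcompat : ∀ (g : G) (i : Fin n), g • u i = op (h g i) • u (π g i)) :
    ∃ e : (⨂[R] _ : Fin n, (X →₀ R)) ≃ₗ[R] ((Fin n → X) →₀ R),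
      ∀ (g : G) (v : ⨂[R] _ : Fin n, (X →₀ R)),
        e (tInd π h (fun b => Finsupp.domLCongr (MulAction.toPerm b)) g v) =
          Finsupp.mapDomain (sAct π h (fun b p => b • p) g) (e v) := by
  refine ⟨myEquiv n, fun g v => ?_⟩
  have key : (myEquiv (R := R) (X := X) n).toLinearMap ∘ₗ
      (tInd π h (fun b => Finsupp.domLCongr (MulAction.toPerm b)) g).toLinearMap =
      Finsupp.lmapDomain R R (sAct π h (fun b p => b • p) g) ∘ₗ
        (myEquiv (R := R) (X := X) n).toLinearMap := by
    apply PiTensorProduct.ext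
    apply Module.Basis.ext_multilinear (fun _ => Finsupp.basisSingleOne)
    intro v
    simp only [LinearMap.compMultilinearMap_apply, LinearMap.comp_apply,
      Finsupp.coe_basisSingleOne, LinearEquiv.coe_coe]
    rw [show tInd π h (fun b => Finsupp.domLCongr (R := R) (M := R) (MulAction.toPerm b)) g
        (PiTensorProduct.tprod R fun i => Finsupp.single (v i) 1) =
        PiTensorProduct.tprod R fun i =>
          Finsupp.single (sAct π h (fun b p => b • p) g v i) 1 from ?_]
    · rw [myEquiv_tprod_single, myEquiv_tprod_single, Finsupp.lmapDomain_apply,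
        Finsupp.mapDomain_single]
    · rw [tInd, LinearEquiv.trans_apply, PiTensorProduct.reindex_tprod,
        PiTensorProduct.congr_tprod]
      congr 1
      funext i
      rw [Finsupp.domLCongr_single]
      rfl
  have := LinearMap.congr_fun key v
  simpa using this
end

section
/- If z is a unit in the ring of integers ℤ[μ] of a cyclotomic field ℚ(μ) such that z·σ₋₁(z) = 1, where σ₋₁ is the automorphism sending μ to μ⁻¹ (complex conjugation), then z is a root of unity; in particular z = ±μ^f for some integer f when μ has odd or prime-power order appropriately, and the group of such orthogonal units is exactly the torsion subgroup of ℤ[μ]^×. -/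
open NumberField

private lemma aux_class {K : Type*} [Field K] [NumberField K] (h : ℕ+)
    [IsCyclotomicExtension {(h : ℕ)} ℚ K] {μ x : K} (hμ : IsPrimitiveRoot μ (h : ℕ))
    (hx : IsOfFinOrder x) : ∃ f : ℕ, x = μ ^ f ∨ x = -μ ^ f := by
  haveI : NeZero (h : ℕ) := ⟨h.ne_zero⟩
  rcases Nat.even_or_odd (h : ℕ) with he | ho
  · -- even case: the order of `x` divides `h`, so `x = μ ^ f`
    have hl0 : orderOf x ≠ 0 := hx.orderOf_pos.ne'
    have hx' : IsPrimitiveRoot x (orderOf x) := IsPrimitiveRoot.orderOf x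
    have hdvd : orderOf x ∣ 2 * (h : ℕ) := hx'.dvd_of_isCyclotomicExtension h hl0
    have hlh : orderOf x ∣ (h : ℕ) := by
      by_contra hnd
      have hlcm : Nat.lcm (orderOf x) (h : ℕ) = 2 * (h : ℕ) := by
        have h1 : Nat.lcm (orderOf x) (h : ℕ) ∣ 2 * (h : ℕ) :=
          Nat.lcm_dvd hdvd (dvd_mul_left _ _)
        obtain ⟨k, hk⟩ := Nat.dvd_lcm_right (orderOf x) (h : ℕ)
        have hk2 : k ∣ 2 := by
          rw [hk, mul_comm 2 (h : ℕ)] at h1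
          exact (Nat.mul_dvd_mul_iff_left h.pos).mp h1
        rcases (Nat.prime_two.eq_one_or_self_of_dvd k hk2) with hk1 | hk1
        · exfalso
          apply hnd
          have : Nat.lcm (orderOf x) (h : ℕ) = (h : ℕ) := by rw [hk, hk1, mul_one]
          exact this ▸ Nat.dvd_lcm_left _ _
        · rw [hk, hk1, mul_comm]
      have hpos : 0 < Nat.lcm (orderOf x) (h : ℕ) := by
        rw [hlcm]; positivity
      have key := hx'.lcm_totient_le_finrank hμ (Polynomial.cyclotomic.irreducible_rat hpos)
      rw [IsCyclotomicExtension.finrank K (Polynomial.cyclotomic.irreducible_rat h.pos),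
        hlcm, Nat.totient_mul_of_prime_of_dvd Nat.prime_two he.two_dvd] at key
      have hφ : 0 < Nat.totient (h : ℕ) := Nat.totient_pos.2 h.pos
      omega
    have hxh : x ^ (h : ℕ) = 1 := orderOf_dvd_iff_pow_eq_one.1 hlh
    haveI : NeZero (h : ℕ) := ⟨h.ne_zero⟩
    obtain ⟨f, -, hf⟩ := hμ.eq_pow_of_pow_eq_one hxh
    exact ⟨f, Or.inl hf.symm⟩
  · obtain ⟨r, -, hr⟩ := hμ.exists_pow_or_neg_mul_pow_of_isOfFinOrder ho hx
    exact ⟨r, hr⟩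

/-- If `z` is a unit of the ring of integers `ℤ[μ]` of the cyclotomic field `ℚ(μ)` with
`z·σ₋₁(z) = 1`, where `σ₋₁` is the automorphism sending `μ ↦ μ⁻¹` (complex conjugation),
then `z` is a root of unity — indeed `z = ±μ^f` for some `f` — and the group of such
orthogonal units is exactly the torsion subgroup of `ℤ[μ]ˣ`. -/
theorem stmt17 (h : ℕ+) (μ : CyclotomicField h ℚ) (hμ : IsPrimitiveRoot μ (h : ℕ))
    (σ : CyclotomicField h ℚ ≃ₐ[ℚ] CyclotomicField h ℚ) (hσ : σ μ = μ⁻¹)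
    (z : (𝓞 (CyclotomicField h ℚ))ˣ) :
    (algebraMap (𝓞 (CyclotomicField h ℚ)) (CyclotomicField h ℚ) ↑z *
        σ (algebraMap (𝓞 (CyclotomicField h ℚ)) (CyclotomicField h ℚ) ↑z) = 1 →
      (∃ m : ℕ, 0 < m ∧ z ^ m = 1) ∧
      ∃ f : ℕ, algebraMap (𝓞 (CyclotomicField h ℚ)) (CyclotomicField h ℚ) ↑z = μ ^ f ∨
        algebraMap (𝓞 (CyclotomicField h ℚ)) (CyclotomicField h ℚ) ↑z = -μ ^ f) ∧
    (algebraMap (𝓞 (CyclotomicField h ℚ)) (CyclotomicField h ℚ) ↑z *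
        σ (algebraMap (𝓞 (CyclotomicField h ℚ)) (CyclotomicField h ℚ) ↑z) = 1 ↔
      IsOfFinOrder z) := by
  haveI : NeZero (h : ℕ) := ⟨h.ne_zero⟩
  haveI : NeZero ((h : ℕ) : ℚ) := ⟨by exact_mod_cast h.ne_zero⟩
  haveI : IsCyclotomicExtension {(h : ℕ)} ℚ (CyclotomicField h ℚ) :=
    CyclotomicField.isCyclotomicExtension (h : ℕ) ℚ
  haveI : NumberField (CyclotomicField h ℚ) :=
    IsCyclotomicExtension.numberField {(h : ℕ)} ℚ (CyclotomicField h ℚ)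
  set x : CyclotomicField h ℚ :=
    algebraMap (𝓞 (CyclotomicField h ℚ)) (CyclotomicField h ℚ) ↑z with hxdef
  have hμ0 : μ ≠ 0 := hμ.ne_zero h.ne_zero
  -- if `z·σ(z) = 1` then all complex embeddings of `x` have norm one
  have hnorm : x * σ x = 1 → ∀ φ : CyclotomicField h ℚ →+* ℂ, ‖φ x‖ = 1 := by
    intro hz φ
    have hconjμ : (starRingEnd ℂ) (φ μ) = φ (σ μ) := by
      have hpow : φ μ ^ (h : ℕ) = 1 := by
        rw [← map_pow, hμ.pow_eq_one, map_one]
      have h1 : ‖φ μ‖ = 1 := Complex.norm_eq_one_of_pow_eq_one hpow h.ne_zero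
      rw [hσ, map_inv₀, (Complex.inv_eq_conj h1).symm]
    have hconj : ((starRingEnd ℂ).comp φ).toRatAlgHom =
        (φ.comp (σ : CyclotomicField h ℚ →+* CyclotomicField h ℚ)).toRatAlgHom := by
      apply (hμ.powerBasis ℚ).algHom_ext
      rw [hμ.powerBasis_gen ℚ]
      exact hconjμ
    have hconjx : (starRingEnd ℂ) (φ x) = φ (σ x) := by
      have := congrArg (fun f => f x) hconj
      simpa using this
    have hmul : φ x * (starRingEnd ℂ) (φ x) = 1 := by
      rw [hconjx, ← map_mul, hz, map_one]
    rw [Complex.mul_conj] at hmul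
    have h2 : Complex.normSq (φ x) = 1 := by exact_mod_cast hmul
    have h3 : ‖φ x‖ ^ 2 = 1 := by
      rw [Complex.sq_norm, h2]
    nlinarith [norm_nonneg (φ x)]
  -- from norms one, `x` (hence `z`) is a root of unity
  have hfin : x * σ x = 1 → ∃ m : ℕ, 0 < m ∧ z ^ m = 1 := by
    intro hz
    obtain ⟨m, hm, hxm⟩ := Embeddings.pow_eq_one_of_norm_eq_one (CyclotomicField h ℚ) ℂ
      ((z : 𝓞 (CyclotomicField h ℚ)).isIntegral_coe) (hnorm hz)
    refine ⟨m, hm, Units.ext (RingOfIntegers.coe_injective ?_)⟩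
    rw [Units.val_pow_eq_pow_val, Units.val_one, map_pow, map_one]
    exact hxm
  -- finite order of `z` gives finite order of `x`
  have hfx : IsOfFinOrder z → IsOfFinOrder x := by
    intro hf
    obtain ⟨m, hm, hzm⟩ := isOfFinOrder_iff_pow_eq_one.1 hf
    refine isOfFinOrder_iff_pow_eq_one.2 ⟨m, hm, ?_⟩
    rw [hxdef, ← map_pow, ← Units.val_pow_eq_pow_val, hzm]
    simp
  -- finite order of `z` gives `z·σ(z) = 1`
  have hback : IsOfFinOrder z → x * σ x = 1 := by
    intro hf
    obtain ⟨f, hcase⟩ := aux_class h hμ (hfx hf)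
    rcases hcase with hc | hc
    · rw [hc, map_pow, hσ, inv_pow]
      exact mul_inv_cancel₀ (pow_ne_zero _ hμ0)
    · rw [hc, map_neg, map_pow, hσ, neg_mul_neg, inv_pow]
      exact mul_inv_cancel₀ (pow_ne_zero _ hμ0)
  refine ⟨fun hz => ⟨hfin hz, ?_⟩, ⟨fun hz => ?_, hback⟩⟩
  · obtain ⟨m, hm, hzm⟩ := hfin hz
    exact aux_class h hμ (hfx (isOfFinOrder_iff_pow_eq_one.2 ⟨m, hm, hzm⟩))
  · obtain ⟨m, hm, hzm⟩ := hfin hz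
    exact isOfFinOrder_iff_pow_eq_one.2 ⟨m, hm, hzm⟩
end

section
/- Let τ_G : T_F(G) → T̃_F(G) be the injective ghost map with finite cokernel, preserving multiplication and duality. Then the group U_∘(T_F(G)) of orthogonal units (units a with a⁻¹ = a°) equals the torsion subgroup of T_F(G)^×. -/
/-- Let `τ_G : T_F(G) → T̃_F(G)` be the injective ghost map of the trivial source ring,
with finite cokernel, commuting with the duality operators `-°`; in the ghost ring the
orthogonal units are exactly the torsion units.  Then the group of orthogonal units
`U∘(T_F(G)) = {a ∈ T_F(G)ˣ : a⁻¹ = a°}` equals the torsion subgroup of `T_F(G)ˣ`. -/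
theorem stmt18 {T Tt : Type*} [CommRing T] [CommRing Tt]
    (dualT : T ≃+* T) (dualTt : Tt ≃+* Tt)
    (hdT : ∀ a, dualT (dualT a) = a) (hdTt : ∀ b, dualTt (dualTt b) = b)
    (τ : T →+* Tt) (hinj : Function.Injective τ)
    (hcok : ∃ m : ℕ, 0 < m ∧ ∀ b : Tt, ∃ a : T, m • b = τ a)
    (hcomm : ∀ a, τ (dualT a) = dualTt (τ a))
    (hghost : ∀ b : Ttˣ, ((b⁻¹ : Ttˣ) : Tt) = dualTt b ↔ IsOfFinOrder b) :
    ∀ a : Tˣ, ((a⁻¹ : Tˣ) : T) = dualT a ↔ IsOfFinOrder a := by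
  intro a
  set b : Ttˣ := Units.map (τ : T →* Tt) a with hbdef
  have hb : ∀ n : ℕ, b ^ n = 1 ↔ a ^ n = 1 := by
    intro n
    constructor
    · intro h
      ext
      apply hinj
      have := congrArg Units.val h
      simpa [hbdef, Units.coe_map] using this
    · intro h
      rw [hbdef, ← map_pow, h, map_one]
  have hbinv : ((b⁻¹ : Ttˣ) : Tt) = τ ((a⁻¹ : Tˣ) : T) := by
    simp [hbdef, Units.coe_map]
  constructor
  · intro h
    have hfin : IsOfFinOrder b := by
      rw [← hghost]
      rw [hbinv, h, hcomm]
      simp [hbdef, Units.coe_map]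
    rw [isOfFinOrder_iff_pow_eq_one] at hfin ⊢
    obtain ⟨n, hn, h1⟩ := hfin
    exact ⟨n, hn, (hb n).mp h1⟩
  · intro h
    have hfin : IsOfFinOrder b := by
      rw [isOfFinOrder_iff_pow_eq_one] at h ⊢
      obtain ⟨n, hn, h1⟩ := h
      exact ⟨n, hn, (hb n).mpr h1⟩
    have h2 := (hghost b).mpr hfin
    apply hinj
    rw [hcomm, ← hbinv, h2]
    simp [hbdef, Units.coe_map]
end

section
/- The orthogonal unit group of the Brauer character ring R_F(G) is U_∘(R_F(G)) = { ±χ|_{E_p(G)} : χ ∈ Ĝ }, i.e., signs times restrictions of linear characters of G to the p-regular elements; consequently it is a finite group. -/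
/-- The orthogonal unit group of the Brauer character ring:
`U∘(R_F(G)) = {±χ|_{E_p(G)} : χ ∈ Ĝ}`, and in particular it is finite.  Here
`d : R_K(G) → R_F(G)` is the (surjective) decomposition map (restriction to `p`-regular
elements), `m` is its dual-preserving ring-morphism section `m(ψ)(x) = ψ(x_{p'})`, and
`L = {±χ : χ ∈ Ĝ}` is the orthogonal unit group of the character ring given by
Yamauchi's theorem. -/
theorem stmt19 {RK RF : Type*} [CommRing RK] [CommRing RF]
    (dualK : RK ≃+* RK) (dualF : RF ≃+* RF)
    (hdK : ∀ a, dualK (dualK a) = a) (hdF : ∀ b, dualF (dualF b) = b)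
    (d : RK →+* RF) (m : RF →+* RK)
    (hd : ∀ a, d (dualK a) = dualF (d a)) (hm : ∀ b, m (dualF b) = dualK (m b))
    (hsec : ∀ b, d (m b) = b)
    (L : Set RK) (hLfin : L.Finite)
    (hYamauchi : {a : RK | ∃ v : RKˣ, (v : RK) = a ∧ ((v⁻¹ : RKˣ) : RK) = dualK a} = L) :
    {b : RF | ∃ w : RFˣ, (w : RF) = b ∧ ((w⁻¹ : RFˣ) : RF) = dualF b} = d '' L ∧
    {b : RF | ∃ w : RFˣ, (w : RF) = b ∧ ((w⁻¹ : RFˣ) : RF) = dualF b}.Finite := by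
  have hEq : {b : RF | ∃ w : RFˣ, (w : RF) = b ∧ ((w⁻¹ : RFˣ) : RF) = dualF b} = d '' L := by
    ext b
    constructor
    · rintro ⟨w, rfl, hw⟩
      refine ⟨m w, ?_, hsec w⟩
      rw [← hYamauchi]
      refine ⟨Units.map (m : RF →* RK) w, rfl, ?_⟩
      rw [← map_inv, Units.coe_map]; simp [hw, hm]
    · rintro ⟨a, ha, rfl⟩
      rw [← hYamauchi] at ha
      obtain ⟨v, rfl, hv⟩ := ha
      refine ⟨Units.map (d : RK →* RF) v, rfl, ?_⟩
      rw [← map_inv, Units.coe_map]; simp [hv, hd]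
  exact ⟨hEq, hEq ▸ hLfin.image d⟩
end
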